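/- arXiv:2201.04423 — 4 statements merged into one kernel-verified Lean document; each statement's English description precedes it below -/
import Mathlib

section
/- Let D be a totally ordered integral domain, B a boolean algebra, and ≺ a de Vries proximity on B. Define ≺^♭ on D[B]^♭ by f ≺^♭ g iff f(b) ≺ g(b) for all b ∈ D. Then ≺^♭ is a proximity on the Specker D-algebra D[B]^♭, and it is the unique proximity on D[B]^♭ whose restriction to the idempotents corresponds to ≺ under the canonical boolean isomorphism B ≅ Id(D[B]^♭). -/
open Finset

/-- A `D`-algebra `S` is torsion-free as a `D`-module. -/
def SpTorsionFree (D S : Type*) [CommRing D] [CommRing S] [Algebra D S] : Prop :=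
  ∀ (a : D) (s : S), a • s = 0 → a = 0 ∨ s = 0

/-- `S` is generated as a `D`-algebra by its idempotents. -/
def SpIdemGenerated (D S : Type*) [CommRing D] [CommRing S] [Algebra D S] : Prop :=
  Algebra.adjoin D {e : S | IsIdempotentElem e} = ⊤

/-- A Specker `D`-algebra: commutative unital, torsion-free, idempotent-generated. -/
def IsSpecker (D S : Type*) [CommRing D] [CommRing S] [Algebra D S] : Prop :=
  SpTorsionFree D S ∧ SpIdemGenerated D S

/-- The idempotents of `S`. -/
abbrev IdemOf (S : Type*) [Monoid S] := {e : S // IsIdempotentElem e}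

/-- A full orthogonal decomposition of `s` with pairwise distinct coefficients and
nonzero pairwise orthogonal idempotents summing (= joining) to `1`. -/
def FullOrthDecomp (D S : Type*) [CommRing D] [CommRing S] [Algebra D S] {n : ℕ}
    (a : Fin n → D) (e : Fin n → S) (s : S) : Prop :=
  Function.Injective a ∧ (∀ i, IsIdempotentElem (e i)) ∧ (∀ i, e i ≠ 0) ∧
    (∀ i j, i ≠ j → e i * e j = 0) ∧ (∑ i, e i = 1) ∧ s = ∑ i, a i • e i

/-- `s` has an orthogonal decomposition with nonnegative coefficients. -/
def OrthNonnegDecomp (D S : Type*) [CommRing D] [LinearOrder D] [IsStrictOrderedRing D] [CommRing S] [Algebra D S]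
    (s : S) : Prop :=
  ∃ (n : ℕ) (a : Fin n → D) (e : Fin n → S),
    (∀ i, 0 ≤ a i) ∧ (∀ i, IsIdempotentElem (e i)) ∧
    (∀ i j, i ≠ j → e i * e j = 0) ∧ s = ∑ i, a i • e i

/-- The canonical f-algebra order relation on a Specker algebra. -/
def specLE (D S : Type*) [CommRing D] [LinearOrder D] [IsStrictOrderedRing D] [CommRing S] [Algebra D S]
    (s t : S) : Prop :=
  OrthNonnegDecomp D S (t - s)

section Rel
variable {S : Type*}
def relUB (le : S → S → Prop) (A : Set S) (u : S) : Prop := ∀ x ∈ A, le x u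
def relLB (le : S → S → Prop) (A : Set S) (u : S) : Prop := ∀ x ∈ A, le u x
def relIsLUB (le : S → S → Prop) (A : Set S) (u : S) : Prop :=
  relUB le A u ∧ ∀ v, relUB le A v → le u v
def relIsGLB (le : S → S → Prop) (A : Set S) (u : S) : Prop :=
  relLB le A u ∧ ∀ v, relLB le A v → le v u
end Rel

/-- A function `D → B` belonging to Foster's boolean power `D[B]*`:
finitely valued, pairwise disjoint values, values join to `⊤`. -/
def IsBPFn (D B : Type*) [CommRing D] [BooleanAlgebra B] (f : D → B) : Prop :=
  (Set.range f).Finite ∧ (∀ a b : D, a ≠ b → f a ⊓ f b = ⊥) ∧ IsLUB (Set.range f) ⊤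

/-- Foster's boolean power `D[B]*` as a set of functions. -/
def DBStar (D B : Type*) [CommRing D] [BooleanAlgebra B] : Type _ :=
  {f : D → B // IsBPFn D B f}

/-- The boolean-power `D`-algebra operations on `D[B]*`, characterized via least upper bounds. -/
def FosterOps (D B : Type*) [CommRing D] [BooleanAlgebra B]
    [CommRing (DBStar D B)] [Algebra D (DBStar D B)] : Prop :=
  (∀ f g : DBStar D B, ∀ a : D,
      IsLUB {x : B | ∃ b c : D, b + c = a ∧ x = f.1 b ⊓ g.1 c} ((f + g).1 a)) ∧
  (∀ f g : DBStar D B, ∀ a : D,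
      IsLUB {x : B | ∃ b c : D, b * c = a ∧ x = f.1 b ⊓ g.1 c} ((f * g).1 a)) ∧
  (∀ (b : D) (f : DBStar D B) (a : D),
      IsLUB {x : B | ∃ c : D, b * c = a ∧ x = f.1 c} ((b • f).1 a))

/-- Decreasing step functions `D → B` determined by a chain `1 = e₀ > e₁ > ⋯ > eₙ > 0`
and thresholds `a₀ < a₁ < ⋯ < aₙ`. -/
def IsFlatFn (D B : Type*) [CommRing D] [LinearOrder D] [IsStrictOrderedRing D] [BooleanAlgebra B] (f : D → B) : Prop :=
  ∃ (n : ℕ) (a : Fin (n + 1) → D) (e : Fin (n + 1) → B),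
    StrictMono a ∧ StrictAnti e ∧ e 0 = ⊤ ∧ ⊥ < e (Fin.last n) ∧
    (∀ x : D, x ≤ a 0 → f x = ⊤) ∧
    (∀ (i : Fin n) (x : D), a i.castSucc < x → x ≤ a i.succ → f x = e i.succ) ∧
    (∀ x : D, a (Fin.last n) < x → f x = ⊥)

/-- The de Vries power `D[B]♭` as a set of decreasing step functions. -/
def DBFlat (D B : Type*) [CommRing D] [LinearOrder D] [IsStrictOrderedRing D] [BooleanAlgebra B] : Type _ :=
  {f : D → B // IsFlatFn D B f}

/-- A proximity on a torsion-free f-algebra over `D` (axioms (P1)–(P10)). -/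
def IsProximity (D S : Type*) [CommRing D] [LinearOrder D] [IsStrictOrderedRing D] [CommRing S] [Algebra D S]
    [Lattice S] (r : S → S → Prop) : Prop :=
  (r 0 0 ∧ r 1 1) ∧
  (∀ s t : S, r s t → s ≤ t) ∧
  (∀ s t u v : S, s ≤ t → r t u → u ≤ v → r s v) ∧
  (∀ s t u : S, r s t → r s u → r s (t ⊓ u)) ∧
  (∀ s t : S, r s t → r (-t) (-s)) ∧
  (∀ s t u v : S, r s t → r u v → r (s + u) (t + v)) ∧
  (∀ (s t : S) (a : D), 0 < a → r s t → r (a • s) (a • t)) ∧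
  (∀ s t : S, (∃ a : D, 0 < a ∧ r (a • s) (a • t)) → r s t) ∧
  (∀ s t u v : S, 0 ≤ s → 0 ≤ t → 0 ≤ u → 0 ≤ v → r s t → r u v → r (s * u) (t * v)) ∧
  (∀ s t : S, r s t → ∃ u, r s u ∧ r u t) ∧
  (∀ s : S, 0 < s → ∃ t, 0 < t ∧ r t s)

/-- A de Vries proximity on a boolean algebra. -/
def IsDeVriesProx (B : Type*) [BooleanAlgebra B] (p : B → B → Prop) : Prop :=
  (p ⊥ ⊥ ∧ p ⊤ ⊤) ∧
  (∀ a b : B, p a b → a ≤ b) ∧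
  (∀ a b c d : B, a ≤ b → p b c → c ≤ d → p a d) ∧
  (∀ a b c : B, p a b → p a c → p a (b ⊓ c)) ∧
  (∀ a b : B, p a b → p bᶜ aᶜ) ∧
  (∀ a b : B, p a b → ∃ c, p a c ∧ p c b) ∧
  (∀ a : B, a ≠ ⊥ → ∃ b, b ≠ ⊥ ∧ p b a)

/-- A Baer ring: the annihilator of every ideal is generated by an idempotent. -/
def IsBaer (S : Type*) [CommRing S] : Prop :=
  ∀ I : Ideal S, ∃ e : S, IsIdempotentElem e ∧
    ∀ r : S, (∀ s ∈ I, r * s = 0) ↔ ∃ x : S, r = x * e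

/-- Proximity morphisms between proximity (Baer-)Specker algebras (axioms (M1)–(M7)). -/
def IsProxMorphism (D S T : Type*) [CommRing D] [LinearOrder D] [IsStrictOrderedRing D]
    [CommRing S] [Algebra D S] [CommRing T] [Algebra D T] [Lattice S] [Lattice T]
    (rS : S → S → Prop) (rT : T → T → Prop) (α : S → T) : Prop :=
  α 0 = 0 ∧
  (∀ s t : S, α (s ⊓ t) = α s ⊓ α t) ∧
  (∀ s t : S, rS s t → rT (-(α (-s))) (α t)) ∧
  (∀ t : S, IsLUB {x : T | ∃ s : S, rS s t ∧ x = α s} (α t)) ∧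
  (∀ (s : S) (a : D), α (s + algebraMap D S a) = α s + algebraMap D T a) ∧
  (∀ (s : S) (a : D), 0 ≤ a → α (a • s) = a • α s) ∧
  (∀ (s : S) (a : D), α (s ⊔ algebraMap D S a) = α s ⊔ algebraMap D T a)

set_option linter.unusedSectionVars false
set_option linter.unusedVariables false
namespace St16

/-! ### de Vries proximity helper rules -/

section PRules
variable {B : Type*} [BooleanAlgebra B] {p : B → B → Prop} (hp : IsDeVriesProx B p)
include hp

lemma psq {a b c d : B} (h1 : a ≤ b) (h2 : p b c) (h3 : c ≤ d) : p a d :=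
  hp.2.2.1 _ _ _ _ h1 h2 h3

lemma pbot (c : B) : p ⊥ c := psq hp le_rfl hp.1.1 bot_le

lemma ptop (c : B) : p c ⊤ := psq hp le_top hp.1.2 le_rfl

lemma pinf2 {a b c : B} (h1 : p a b) (h2 : p a c) : p a (b ⊓ c) := hp.2.2.2.1 _ _ _ h1 h2

lemma pcompl {a b : B} (h : p a b) : p bᶜ aᶜ := hp.2.2.2.2.1 _ _ h

lemma pjoin2 {a b c : B} (h1 : p a c) (h2 : p b c) : p (a ⊔ b) c := by
  have := pinf2 hp (pcompl hp h1) (pcompl hp h2)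
  rw [← compl_sup] at this
  have := pcompl hp this
  simpa using this

lemma pmeetmono {a b c d : B} (h1 : p a b) (h2 : p c d) : p (a ⊓ c) (b ⊓ d) :=
  pinf2 hp (psq hp inf_le_left h1 le_rfl) (psq hp inf_le_right h2 le_rfl)

lemma psupF {ι : Type*} {σ : Finset ι} {F : ι → B} {c : B}
    (h : ∀ i ∈ σ, p (F i) c) : p (σ.sup F) c := by
  classical
  induction σ using Finset.cons_induction with
  | empty => simpa using pbot hp c
  | cons a s ha ih =>
      rw [Finset.sup_cons]
      exact pjoin2 hp (h a (Finset.mem_cons_self a s))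
        (ih fun i hi => h i (Finset.mem_cons_of_mem hi))

lemma pinfF {ι : Type*} {σ : Finset ι} {F : ι → B} {x : B}
    (h : ∀ i ∈ σ, p x (F i)) : p x (σ.inf F) := by
  classical
  induction σ using Finset.cons_induction with
  | empty => simpa using ptop hp x
  | cons a s ha ih =>
      rw [Finset.inf_cons]
      exact pinf2 hp (h a (Finset.mem_cons_self a s))
        (ih fun i hi => h i (Finset.mem_cons_of_mem hi))

lemma ptransfer {ι : Type*} {σ : Finset ι} {F : ι → B} {S : Set B} {z u : B}
    (hz : IsLUB S z) (hmem : ∀ i ∈ σ, F i ∈ S)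
    (hcov : ∀ s ∈ S, s = ⊥ ∨ ∃ i ∈ σ, s ≤ F i)
    (hrel : ∀ i ∈ σ, p (F i) u) : p z u := by
  classical
  have hub : IsLUB S (σ.sup F) := by
    constructor
    · intro s hs
      rcases hcov s hs with rfl | ⟨i, hi, hle⟩
      · exact bot_le
      · exact hle.trans (Finset.le_sup hi)
    · intro w hw
      exact Finset.sup_le fun i hi => hw (hmem i hi)
  rw [hz.unique hub]
  exact psupF hp hrel

end PRules

/-! ### Flat function data -/

section Flat
variable {D B : Type*} [CommRing D] [LinearOrder D] [IsStrictOrderedRing D] [BooleanAlgebra B]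

structure FD (f : D → B) where
  T : Finset D
  ne : T.Nonempty
  anti : Antitone f
  top : ∀ x, (∀ t ∈ T, x ≤ t) → f x = ⊤
  cell : ∀ x y, (∀ t ∈ T, (x ≤ t ↔ y ≤ t)) → f x = f y
  bot : ∀ x, (∀ t ∈ T, ¬ x ≤ t) → f x = ⊥
  rep : ∀ b, f b ≠ ⊥ → ∃ s ∈ T, b ≤ s ∧ f s = f b

lemma fd_of_flat {f : D → B} (hf : IsFlatFn D B f) : Nonempty (FD f) := by
  classical
  obtain ⟨n, a, e, ha, he, he0, _hel, h1, h2, h3⟩ := hf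
  -- value at a minimal dominating index
  have key : ∀ (x : D) (j : Fin (n+1)), x ≤ a j → (∀ i, x ≤ a i → j ≤ i) → f x = e j := by
    intro x j hxj hmin
    rcases Fin.eq_zero_or_eq_succ j with rfl | ⟨i, rfl⟩
    · rw [h1 x hxj, he0]
    · refine h2 i x ?_ hxj
      by_contra hc
      push_neg at hc
      exact absurd (hmin _ hc) (not_le.mpr (Fin.castSucc_lt_succ (i := i)))
  have noval : ∀ x : D, (∀ i, ¬ x ≤ a i) → f x = ⊥ := by
    intro x hx
    exact h3 x (lt_of_not_ge (hx (Fin.last n)))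
  have minj : ∀ x : D, (∃ i, x ≤ a i) →
      ∃ j, x ≤ a j ∧ ∀ i, x ≤ a i → j ≤ i := by
    intro x hx
    obtain ⟨i0, hi0⟩ := hx
    have hne : (Finset.univ.filter (fun i => x ≤ a i)).Nonempty :=
      ⟨i0, by simpa using hi0⟩
    refine ⟨(Finset.univ.filter (fun i => x ≤ a i)).min' hne, ?_, ?_⟩
    · have := Finset.min'_mem _ hne; simpa using this
    · intro i hi
      exact Finset.min'_le _ _ (by simpa using hi)
  refine ⟨⟨Finset.image a Finset.univ, ⟨a 0, by simp⟩, ?_, ?_, ?_, ?_, ?_⟩⟩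
  · -- anti
    intro x y hxy
    by_cases hy : ∃ i, y ≤ a i
    · obtain ⟨j, hj, hjm⟩ := minj y hy
      obtain ⟨j', hj', hjm'⟩ := minj x ⟨j, hxy.trans hj⟩
      rw [key y j hj hjm, key x j' hj' hjm']
      exact he.antitone (hjm' j (hxy.trans hj))
    · push_neg at hy
      rw [noval y (fun i => not_le.mpr (hy i))]; exact bot_le
  · -- top
    intro x hx
    exact h1 x (hx (a 0) (by simp))
  · -- cell
    intro x y hxy
    have hxy' : ∀ i, x ≤ a i ↔ y ≤ a i := fun i => hxy (a i) (by simp)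
    by_cases hx : ∃ i, x ≤ a i
    · obtain ⟨j, hj, hjm⟩ := minj x hx
      have hy : y ≤ a j := (hxy' j).mp hj
      rw [key x j hj hjm, key y j hy (fun i hi => hjm i ((hxy' i).mpr hi))]
    · have hy : ¬ ∃ i, y ≤ a i := by
        rintro ⟨i, hi⟩; exact hx ⟨i, (hxy' i).mpr hi⟩
      push_neg at hx hy
      rw [noval x (fun i => not_le.mpr (hx i)), noval y (fun i => not_le.mpr (hy i))]
  · -- bot
    intro x hx
    exact noval x fun i => hx (a i) (by simp)
  · -- rep
    intro b hb
    have hx : ∃ i, b ≤ a i := by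
      by_contra hc; push_neg at hc; exact hb (noval b (fun i => not_le.mpr (hc i)))
    obtain ⟨j, hj, hjm⟩ := minj b hx
    refine ⟨a j, by simp, hj, ?_⟩
    rw [key b j hj hjm, key (a j) j le_rfl (fun i hi => (ha.le_iff_le).mp hi)]

lemma FD.rlim {f : D → B} (d : FD f) (x : D) :
    ∃ c, x < c ∧ ∀ y, x < y → y ≤ c → f y = f c := by
  classical
  by_cases h : ∃ t ∈ d.T, x < t
  · obtain ⟨t0, ht0, hxt0⟩ := h
    have hne : (d.T.filter (fun t => x < t)).Nonempty := ⟨t0, by simp [ht0, hxt0]⟩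
    set c := (d.T.filter (fun t => x < t)).min' hne with hc
    have hcm := Finset.min'_mem _ hne
    rw [Finset.mem_filter] at hcm
    refine ⟨c, hcm.2, ?_⟩
    intro y hxy hyc
    refine d.cell y c ?_
    intro t ht
    constructor
    · intro hyt
      exact Finset.min'_le _ _ (Finset.mem_filter.mpr ⟨ht, lt_of_lt_of_le hxy hyt⟩)
    · intro hct; exact hyc.trans hct
  · push_neg at h
    refine ⟨x + 1, lt_add_one x, ?_⟩
    intro y hxy _
    rw [d.bot y (fun t ht => not_le.mpr (lt_of_le_of_lt (h t ht) hxy)),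
      d.bot (x+1) (fun t ht => not_le.mpr (lt_of_le_of_lt (h t ht) (lt_add_one x)))]

lemma FD.llim {f : D → B} (d : FD f) (b : D) :
    ∃ c, c < b ∧ ∀ x, c < x → x ≤ b → f x = f b := by
  classical
  by_cases h : ∃ t ∈ d.T, t < b
  · obtain ⟨t0, ht0, hbt0⟩ := h
    have hne : (d.T.filter (fun t => t < b)).Nonempty := ⟨t0, by simp [ht0, hbt0]⟩
    set c := (d.T.filter (fun t => t < b)).max' hne with hc
    have hcm := Finset.max'_mem _ hne
    rw [Finset.mem_filter] at hcm
    refine ⟨c, hcm.2, ?_⟩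
    intro x hcx hxb
    refine d.cell x b ?_
    intro t ht
    constructor
    · intro hxt
      by_contra hbt
      have : t ∈ d.T.filter (fun t => t < b) := Finset.mem_filter.mpr ⟨ht, lt_of_not_ge hbt⟩
      exact absurd (le_trans hxt (Finset.le_max' _ _ this)) (not_le.mpr hcx)
    · intro hbt; exact hxb.trans hbt
  · push_neg at h
    refine ⟨b - 1, sub_one_lt b, ?_⟩
    intro x _ hxb
    refine d.cell x b ?_
    intro t ht
    exact iff_of_true (hxb.trans (h t ht)) (h t ht)

end Flat

end St16
namespace St16
section Flat2
variable {D B : Type*} [CommRing D] [LinearOrder D] [IsStrictOrderedRing D] [BooleanAlgebra B]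

/-- enumeration of a nonempty finset of `D` -/
lemma enumT (T : Finset D) (hT : T.Nonempty) :
    ∃ (m : ℕ) (c : Fin (m+1) → D), StrictMono c ∧ (∀ i, c i ∈ T) ∧ (∀ t ∈ T, ∃ i, c i = t) := by
  classical
  have hcard : T.card = (T.card - 1) + 1 := by
    have := Finset.card_pos.mpr hT; omega
  refine ⟨T.card - 1, fun i => (T.orderIsoOfFin hcard i : D), ?_, ?_, ?_⟩
  · intro i j hij
    exact_mod_cast (T.orderIsoOfFin hcard).strictMono hij
  · intro i; exact (T.orderIsoOfFin hcard i).2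
  · intro t ht
    exact ⟨(T.orderIsoOfFin hcard).symm ⟨t, ht⟩, by simp⟩

lemma isFlatFn_of (hnt : (⊥ : B) < ⊤) (h : D → B) (T : Finset D) (hT : T.Nonempty)
    (anti : Antitone h)
    (top : ∀ x, (∀ t ∈ T, x ≤ t) → h x = ⊤)
    (cell : ∀ x y, (∀ t ∈ T, (x ≤ t ↔ y ≤ t)) → h x = h y)
    (bot : ∀ x, (∀ t ∈ T, ¬ x ≤ t) → h x = ⊥) : IsFlatFn D B h := by
  classical
  obtain ⟨m, c, hc, hcT, hTc⟩ := enumT T hT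
  set v : Fin (m+1) → B := fun i => h (c i) with hv
  have vanti : Antitone v := fun i j hij => anti (hc.le_iff_le.mpr hij)
  have hc0 : ∀ t ∈ T, c 0 ≤ t := by
    intro t ht; obtain ⟨i, rfl⟩ := hTc t ht; exact hc.le_iff_le.mpr (Fin.zero_le i)
  have hv0 : v 0 = ⊤ := top _ hc0
  -- the value of h at any point, via minimal dominating index
  have val : ∀ (x : D) (j : Fin (m+1)), x ≤ c j → (∀ i, x ≤ c i → j ≤ i) → h x = v j := by
    intro x j hxj hmin
    refine cell x (c j) ?_
    intro t ht
    obtain ⟨i, rfl⟩ := hTc t ht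
    constructor
    · intro hxi; exact hc.le_iff_le.mpr (hmin i hxi)
    · intro hji; exact hxj.trans hji
  have noval : ∀ x : D, (∀ i, ¬ x ≤ c i) → h x = ⊥ := by
    intro x hx
    refine bot x ?_
    intro t ht; obtain ⟨i, rfl⟩ := hTc t ht; exact hx i
  have minj : ∀ x : D, (∃ i, x ≤ c i) → ∃ j, x ≤ c j ∧ ∀ i, x ≤ c i → j ≤ i := by
    intro x hx
    obtain ⟨i0, hi0⟩ := hx
    have hne : (Finset.univ.filter (fun i => x ≤ c i)).Nonempty := ⟨i0, by simpa using hi0⟩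
    refine ⟨(Finset.univ.filter (fun i => x ≤ c i)).min' hne, ?_, ?_⟩
    · have := Finset.min'_mem _ hne; simpa using this
    · intro i hi; exact Finset.min'_le _ _ (by simpa using hi)
  -- the set of "last representatives" of each value block
  set K : Finset (Fin (m+1)) :=
    Finset.univ.filter (fun i => v i ≠ ⊥ ∧ ∀ j, i < j → v j ≠ v i) with hK
  have repK : ∀ i, v i ≠ ⊥ → ∃ j ∈ K, i ≤ j ∧ v j = v i := by
    intro i hi
    have hne : (Finset.univ.filter (fun j => i ≤ j ∧ v j = v i)).Nonempty :=
      ⟨i, by simp⟩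
    set j0 := (Finset.univ.filter (fun j => i ≤ j ∧ v j = v i)).max' hne with hj0
    have hj0m := Finset.max'_mem _ hne
    rw [Finset.mem_filter] at hj0m
    refine ⟨j0, ?_, hj0m.2.1, hj0m.2.2⟩
    rw [hK, Finset.mem_filter]
    refine ⟨Finset.mem_univ _, by rw [hj0m.2.2]; exact hi, ?_⟩
    intro j hj hvj
    have : j ∈ Finset.univ.filter (fun j => i ≤ j ∧ v j = v i) := by
      simp only [Finset.mem_filter, Finset.mem_univ, true_and]
      exact ⟨hj0m.2.1.trans hj.le, by rw [hvj, hj0m.2.2]⟩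
    exact absurd (Finset.le_max' _ _ this) (not_le.mpr hj)
  have hKne : K.Nonempty := by
    obtain ⟨j, hjK, _, _⟩ := repK 0 (by rw [hv0]; exact hnt.ne')
    exact ⟨j, hjK⟩
  have hKcard : K.card = (K.card - 1) + 1 := by
    have := Finset.card_pos.mpr hKne; omega
  set k := K.card - 1 with hk
  set ρ : Fin (k+1) → Fin (m+1) := fun i => (K.orderIsoOfFin hKcard i : Fin (m+1)) with hρ
  have hρmono : StrictMono ρ := fun i j hij => (K.orderIsoOfFin hKcard).strictMono hij
  have hρK : ∀ i, ρ i ∈ K := fun i => (K.orderIsoOfFin hKcard i).2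
  have hKρ : ∀ j ∈ K, ∃ i, ρ i = j := by
    intro j hj
    refine ⟨(K.orderIsoOfFin hKcard).symm ⟨j, hj⟩, ?_⟩
    show ((K.orderIsoOfFin hKcard) ((K.orderIsoOfFin hKcard).symm ⟨j, hj⟩) : Fin (m+1)) = j
    rw [OrderIso.apply_symm_apply]
  have hKprop : ∀ j ∈ K, v j ≠ ⊥ ∧ ∀ l, j < l → v l ≠ v j := by
    intro j hj; rw [hK, Finset.mem_filter] at hj; exact hj.2
  -- representatives above any index land at or after the next ρ
  have repAfter : ∀ (i : Fin (k+1)) (j' : Fin (m+1)), j' ∈ K → ρ i < j' →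
      ∀ (isucc : Fin (k+1)), (∀ l : Fin (k+1), i < l → isucc ≤ l) → i < isucc → ρ isucc ≤ j' := by
    intro i j' hj' hij' isucc hsucc hisucc
    obtain ⟨l, rfl⟩ := hKρ j' hj'
    have : i < l := by
      by_contra hc'
      push_neg at hc'
      exact absurd (hρmono.le_iff_le.mpr hc') (not_le.mpr hij')
    exact hρmono.le_iff_le.mpr (hsucc l this)
  have hvρ0 : v (ρ 0) = ⊤ := by
    obtain ⟨j, hjK, _, hvj⟩ := repK 0 (by rw [hv0]; exact hnt.ne')
    have hj : ρ 0 ≤ j := by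
      obtain ⟨l, rfl⟩ := hKρ j hjK
      exact hρmono.le_iff_le.mpr (Fin.zero_le l)
    refine le_antisymm le_top ?_
    calc (⊤:B) = v j := by rw [hvj, hv0]
      _ ≤ v (ρ 0) := vanti hj
  refine ⟨k, fun i => c (ρ i), fun i => v (ρ i), ?_, ?_, ?_, ?_, ?_, ?_, ?_⟩
  · exact fun i j hij => hc (hρmono hij)
  · -- StrictAnti
    intro i j hij
    have h1 : v (ρ j) ≤ v (ρ i) := vanti (hρmono hij).le
    have h2 : v (ρ j) ≠ v (ρ i) := (hKprop _ (hρK i)).2 _ (hρmono hij)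
    exact lt_of_le_of_ne h1 h2
  · -- e 0 = ⊤
    exact hvρ0
  · -- bot < e last
    exact bot_lt_iff_ne_bot.mpr (hKprop _ (hρK (Fin.last k))).1
  · -- head
    intro x hx
    refine le_antisymm le_top ?_
    calc (⊤:B) = v (ρ 0) := hvρ0.symm
      _ ≤ h x := anti hx
  · -- middle intervals
    intro i x hlt hle
    set P := ρ i.castSucc with hP
    set Q := ρ i.succ with hQ
    have hPQ : P < Q := hρmono (Fin.castSucc_lt_succ (i := i))
    -- h x = v j for minimal j
    obtain ⟨j, hj, hjm⟩ := minj x ⟨Q, hle⟩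
    have hxval : h x = v j := val x j hj hjm
    have hjQ : j ≤ Q := hjm Q hle
    have hPj : P < j := by
      by_contra hc'
      push_neg at hc'
      exact absurd (hj.trans (hc.le_iff_le.mpr hc')) (not_le.mpr hlt)
    have hvQ : v j = v Q := by
      have hvjne : v j ≠ ⊥ := by
        intro hbot
        have : v Q ≤ v j := vanti hjQ
        exact (hKprop _ (hρK i.succ)).1 (le_bot_iff.mp (hbot ▸ this))
      obtain ⟨j', hj'K, hjj', hvj'⟩ := repK j hvjne
      have hPj' : P < j' := lt_of_lt_of_le hPj hjj'
      have hQj' : Q ≤ j' := by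
        obtain ⟨l, rfl⟩ := hKρ j' hj'K
        have : i.castSucc < l := by
          by_contra hc'
          push_neg at hc'
          exact absurd (hρmono.le_iff_le.mpr hc') (not_le.mpr hPj')
        exact hρmono.le_iff_le.mpr (Fin.castSucc_lt_iff_succ_le.mp this)
      refine le_antisymm ?_ (vanti hjQ)
      calc v j = v j' := hvj'.symm
        _ ≤ v Q := vanti hQj'
    rw [hxval, hvQ]
  · -- tail
    intro x hx
    by_cases hex : ∃ i, x ≤ c i
    · obtain ⟨j, hj, hjm⟩ := minj x hex
      have hxval : h x = v j := val x j hj hjm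
      by_contra hne'
      have hvjne : v j ≠ ⊥ := fun hb => hne' (by rw [hxval, hb])
      obtain ⟨j', hj'K, hjj', _⟩ := repK j hvjne
      -- j > ρ last
      have hlast : ρ (Fin.last k) < j := by
        by_contra hc'
        push_neg at hc'
        exact absurd (hj.trans (hc.le_iff_le.mpr hc')) (not_le.mpr hx)
      obtain ⟨l, rfl⟩ := hKρ j' hj'K
      have : Fin.last k < l := by
        by_contra hc'
        push_neg at hc'
        have : ρ l ≤ ρ (Fin.last k) := hρmono.le_iff_le.mpr hc'
        exact absurd (lt_of_lt_of_le (lt_of_lt_of_le hlast hjj') this) (lt_irrefl _)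
      exact absurd (Fin.le_last l) (not_le.mpr this)
    · push_neg at hex
      exact noval x (fun i => not_le.mpr (hex i))

end Flat2
end St16
namespace St16
section DB
variable {D B : Type*} [CommRing D] [LinearOrder D] [IsStrictOrderedRing D] [BooleanAlgebra B]
variable [CommRing (DBFlat D B)] [Algebra D (DBFlat D B)] [Lattice (DBFlat D B)]

lemma nontriv (D B : Type*) [CommRing D] [LinearOrder D] [IsStrictOrderedRing D] [BooleanAlgebra B]
    [CommRing (DBFlat D B)] : (⊥ : B) < ⊤ := by
  obtain ⟨n, a, e, _, he, he0, hel, _, _, _⟩ := (0 : DBFlat D B).2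
  calc (⊥:B) < e (Fin.last n) := hel
    _ ≤ e 0 := he.antitone (Fin.zero_le _)
    _ = ⊤ := he0

lemma fdOf (f : DBFlat D B) : Nonempty (FD f.1) := fd_of_flat f.2

noncomputable def fdo (f : DBFlat D B) : FD f.1 := Classical.choice (fdOf f)

lemma fanti (f : DBFlat D B) : Antitone f.1 := (fdo f).anti

lemma flatMeet (f g : DBFlat D B) : IsFlatFn D B (fun b => f.1 b ⊓ g.1 b) := by
  classical
  obtain d1 := fdo f
  obtain d2 := fdo g
  refine isFlatFn_of (nontriv D B) _ (d1.T ∪ d2.T) (d1.ne.inl) ?_ ?_ ?_ ?_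
  · intro x y hxy
    exact inf_le_inf (d1.anti hxy) (d2.anti hxy)
  · intro x hx
    rw [d1.top x (fun t ht => hx t (Finset.mem_union_left _ ht)),
      d2.top x (fun t ht => hx t (Finset.mem_union_right _ ht)), top_inf_eq]
  · intro x y hxy
    rw [d1.cell x y (fun t ht => hxy t (Finset.mem_union_left _ ht)),
      d2.cell x y (fun t ht => hxy t (Finset.mem_union_right _ ht))]
  · intro x hx
    rw [d1.bot x (fun t ht => hx t (Finset.mem_union_left _ ht)), bot_inf_eq]

lemma flatJoin (f g : DBFlat D B) : IsFlatFn D B (fun b => f.1 b ⊔ g.1 b) := by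
  classical
  obtain d1 := fdo f
  obtain d2 := fdo g
  refine isFlatFn_of (nontriv D B) _ (d1.T ∪ d2.T) (d1.ne.inl) ?_ ?_ ?_ ?_
  · intro x y hxy
    exact sup_le_sup (d1.anti hxy) (d2.anti hxy)
  · intro x hx
    rw [d1.top x (fun t ht => hx t (Finset.mem_union_left _ ht)), top_sup_eq]
  · intro x y hxy
    rw [d1.cell x y (fun t ht => hxy t (Finset.mem_union_left _ ht)),
      d2.cell x y (fun t ht => hxy t (Finset.mem_union_right _ ht))]
  · intro x hx
    rw [d1.bot x (fun t ht => hx t (Finset.mem_union_left _ ht)),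
      d2.bot x (fun t ht => hx t (Finset.mem_union_right _ ht)), bot_sup_eq]

variable (hle : ∀ f g : DBFlat D B, f ≤ g ↔ ∀ a : D, f.1 a ≤ g.1 a)
include hle

lemma inf_app (f g : DBFlat D B) (a : D) : (f ⊓ g).1 a = f.1 a ⊓ g.1 a := by
  set m : DBFlat D B := ⟨fun b => f.1 b ⊓ g.1 b, flatMeet f g⟩ with hm
  have h1 : m ≤ f := (hle m f).mpr (fun b => inf_le_left)
  have h2 : m ≤ g := (hle m g).mpr (fun b => inf_le_right)
  have h3 : m ≤ f ⊓ g := le_inf h1 h2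
  have h4 : (f ⊓ g).1 a ≤ f.1 a ⊓ g.1 a :=
    le_inf ((hle _ f).mp inf_le_left a) ((hle _ g).mp inf_le_right a)
  exact le_antisymm h4 ((hle m (f ⊓ g)).mp h3 a)

lemma sup_app (f g : DBFlat D B) (a : D) : (f ⊔ g).1 a = f.1 a ⊔ g.1 a := by
  set m : DBFlat D B := ⟨fun b => f.1 b ⊔ g.1 b, flatJoin f g⟩ with hm
  have h1 : f ≤ m := (hle f m).mpr (fun b => le_sup_left)
  have h2 : g ≤ m := (hle g m).mpr (fun b => le_sup_right)
  have h3 : f ⊔ g ≤ m := sup_le h1 h2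
  have h4 : f.1 a ⊔ g.1 a ≤ (f ⊔ g).1 a :=
    sup_le ((hle f _).mp le_sup_left a) ((hle g _).mp le_sup_right a)
  exact le_antisymm ((hle (f ⊔ g) m).mp h3 a) h4

omit hle

/-- decreasing block function with value `u` on `(0, d]` -/
def blockFn (u : B) (d : D) : D → B := fun x => if x ≤ 0 then ⊤ else if x ≤ d then u else ⊥

lemma blockFn_flat (hnt : (⊥:B) < ⊤) (u : B) (d : D) (hd : 0 < d) :
    IsFlatFn D B (blockFn u d) := by
  classical
  refine isFlatFn_of hnt _ {0, d} ⟨0, by simp⟩ ?_ ?_ ?_ ?_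
  · intro x y hxy
    simp only [blockFn]
    split_ifs <;>
      first
        | exact le_top
        | exact le_rfl
        | exact bot_le
        | (exfalso; linarith)
  · intro x hx
    have hx0 : x ≤ 0 := hx 0 (by simp)
    simp [blockFn, hx0]
  · intro x y hxy
    have e0 : x ≤ 0 ↔ y ≤ 0 := hxy 0 (by simp)
    have ed : x ≤ d ↔ y ≤ d := hxy d (by simp)
    simp only [blockFn]
    rw [if_congr e0 rfl (if_congr ed rfl rfl)]
  · intro x hx
    have h0 : ¬ x ≤ 0 := hx 0 (by simp)
    have hd' : ¬ x ≤ d := hx d (by simp)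
    simp [blockFn, h0, hd']

/-- the canonical idempotent flat element attached to `u : B` -/
def eflat (u : B) : DBFlat D B := ⟨blockFn u 1, blockFn_flat (nontriv D B) u 1 one_pos⟩

lemma eflat_app (u : B) (x : D) :
    (eflat u : DBFlat D B).1 x = if x ≤ 0 then ⊤ else if x ≤ 1 then u else ⊥ := rfl

lemma eflat_app_one (u : B) : (eflat u : DBFlat D B).1 1 = u := by
  rw [eflat_app]
  simp

end DB
end St16
namespace St16
section DB2
variable {D B : Type*} [CommRing D] [LinearOrder D] [IsStrictOrderedRing D] [BooleanAlgebra B]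
variable [CommRing (DBFlat D B)] [Algebra D (DBFlat D B)] [Lattice (DBFlat D B)]
variable (hle : ∀ f g : DBFlat D B, f ≤ g ↔ ∀ a : D, f.1 a ≤ g.1 a)
variable (hzero : ((0 : DBFlat D B)).1 = fun a : D => if a ≤ 0 then (⊤ : B) else ⊥)
variable (hone : ((1 : DBFlat D B)).1 = fun a : D => if a ≤ 1 then (⊤ : B) else ⊥)
variable (hadd : ∀ f g : DBFlat D B, ∀ a : D,
      IsLUB {x : B | ∃ b₁ b₂ : D, a ≤ b₁ + b₂ ∧ x = f.1 b₁ ⊓ g.1 b₂} ((f + g).1 a))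
variable (hsmul : ∀ b : D, 0 < b → ∀ (f : DBFlat D B) (a : D),
      IsLUB {x : B | ∃ c : D, a ≤ b * c ∧ x = f.1 c} ((b • f).1 a))
variable (hmul : ∀ f g : DBFlat D B, 0 ≤ f → 0 ≤ g → ∀ a : D,
      IsLUB {x : B | ∃ b₁ b₂ : D, 0 ≤ b₁ ∧ 0 ≤ b₂ ∧ a ≤ b₁ * b₂ ∧ x = f.1 b₁ ⊓ g.1 b₂}
        ((f * g).1 a))

include hadd hzero in
lemma neg_app (f : DBFlat D B) (x c : D) (hc : -x < c)
    (hconst : ∀ y, -x < y → y ≤ c → f.1 y = f.1 c) : (-f).1 x = (f.1 c)ᶜ := by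
  have hsum : f + (-f) = 0 := add_neg_cancel f
  have step1 : ∀ b₁ b₂ : D, 0 < b₁ + b₂ → f.1 b₁ ⊓ (-f).1 b₂ = ⊥ := by
    intro b₁ b₂ hpos
    have h := hadd f (-f) (b₁ + b₂)
    rw [hsum, hzero] at h
    have hmem : f.1 b₁ ⊓ (-f).1 b₂ ∈
        {x : B | ∃ c₁ c₂ : D, b₁ + b₂ ≤ c₁ + c₂ ∧ x = f.1 c₁ ⊓ (-f).1 c₂} :=
      ⟨b₁, b₂, le_rfl, rfl⟩
    have := h.1 hmem
    simp only [not_le.mpr hpos, if_false] at this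
    exact le_bot_iff.mp this
  have disj : f.1 c ⊓ (-f).1 x = ⊥ := step1 c x (by linarith)
  have h0 := hadd f (-f) 0
  rw [hsum, hzero] at h0
  have hub : ∀ s ∈ {x : B | ∃ c₁ c₂ : D, (0:D) ≤ c₁ + c₂ ∧ x = f.1 c₁ ⊓ (-f).1 c₂},
      s ≤ f.1 c ⊔ (-f).1 x := by
    rintro s ⟨b₁, b₂, hb, rfl⟩
    rcases le_or_gt x b₂ with hxb | hxb
    · exact le_trans inf_le_right (le_trans (fanti (-f) hxb) le_sup_right)
    · have hb₁ : -x < b₁ := by linarith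
      rcases le_or_gt b₁ c with hbc | hbc
      · rw [hconst b₁ hb₁ hbc]
        exact le_trans inf_le_left le_sup_left
      · exact le_trans inf_le_left (le_trans (fanti f hbc.le) le_sup_left)
  have htop : (⊤:B) ≤ f.1 c ⊔ (-f).1 x := by
    have := h0.2 hub
    simpa using this
  have hcompl : IsCompl (f.1 c) ((-f).1 x) :=
    ⟨disjoint_iff.mpr disj, codisjoint_iff.mpr (le_antisymm le_top htop)⟩
  exact hcompl.compl_eq.symm

include hone hsmul in
lemma const_app_pos (a : D) (ha : 0 < a) (x : D) :
    ((a • (1 : DBFlat D B))).1 x = if x ≤ a then ⊤ else ⊥ := by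
  have h := hsmul a ha 1 x
  rcases le_or_gt x a with hxa | hxa
  · rw [if_pos hxa]
    refine le_antisymm le_top ?_
    refine h.1 ⟨1, by rwa [mul_one], ?_⟩
    rw [hone]
    simp
  · rw [if_neg (not_le.mpr hxa)]
    refine le_bot_iff.mp (h.2 ?_)
    rintro s ⟨c, hc, rfl⟩
    rcases le_or_gt c 1 with hc1 | hc1
    · exfalso
      have : a * c ≤ a * 1 := mul_le_mul_of_nonneg_left hc1 ha.le
      rw [mul_one] at this
      linarith
    · rw [hone]
      simp [not_le.mpr hc1]

include hzero hone hadd hsmul in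
lemma const_app (a : D) (x : D) :
    ((a • (1 : DBFlat D B))).1 x = if x ≤ a then ⊤ else ⊥ := by
  rcases lt_trichotomy 0 a with ha | ha | ha
  · exact const_app_pos hone hsmul a ha x
  · subst ha
    rw [zero_smul, hzero]
  · have hrepr : a • (1 : DBFlat D B) = -((-a) • 1) := by rw [← neg_smul, neg_neg]
    have hpos : 0 < -a := by linarith
    rw [hrepr]
    rcases le_or_gt x a with hxa | hxa
    · rw [if_pos hxa]
      have hcon : ∀ y, -x < y → y ≤ -x + 1 → ((-a) • (1:DBFlat D B)).1 y = ((-a) • (1:DBFlat D B)).1 (-x + 1) := by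
        intro y hy _
        rw [const_app_pos hone hsmul _ hpos, const_app_pos hone hsmul _ hpos,
          if_neg, if_neg]
        · intro hcon; nlinarith
        · intro hcon; nlinarith
      rw [neg_app hzero hadd ((-a) • 1) x (-x+1) (by linarith) hcon,
        const_app_pos hone hsmul _ hpos, if_neg (by intro hcon; nlinarith)]
      exact compl_bot
    · rw [if_neg (not_le.mpr hxa)]
      have hcon : ∀ y, -x < y → y ≤ -a → ((-a) • (1:DBFlat D B)).1 y = ((-a) • (1:DBFlat D B)).1 (-a) := by
        intro y hy hya
        rw [const_app_pos hone hsmul _ hpos, const_app_pos hone hsmul _ hpos,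
          if_pos hya, if_pos le_rfl]
      rw [neg_app hzero hadd ((-a) • 1) x (-a) (by linarith) hcon,
        const_app_pos hone hsmul _ hpos, if_pos le_rfl]
      exact compl_top

include hzero hone hadd hsmul in
lemma add_const_app (f : DBFlat D B) (a x : D) :
    (f + a • (1 : DBFlat D B)).1 x = f.1 (x - a) := by
  have h := hadd f (a • 1) x
  refine le_antisymm (h.2 ?_) (h.1 ⟨x - a, a, by rw [sub_add_cancel], ?_⟩)
  · rintro s ⟨b₁, b₂, hb, rfl⟩
    rw [const_app hzero hone hadd hsmul]
    rcases le_or_gt b₂ a with hba | hba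
    · rw [if_pos hba, inf_top_eq]
      exact fanti f (by linarith)
    · rw [if_neg (not_le.mpr hba), inf_bot_eq]
      exact bot_le
  · rw [const_app hzero hone hadd hsmul, if_pos le_rfl, inf_top_eq]

include hsmul in
lemma smul_block_app (u : B) (dd : D) (hdd : 0 < dd) (x : D) :
    ((dd • eflat u) : DBFlat D B).1 x = blockFn u dd x := by
  have h := hsmul dd hdd (eflat u) x
  unfold blockFn
  rcases le_or_gt x 0 with hx0 | hx0
  · rw [if_pos hx0]
    refine le_antisymm le_top (h.1 ⟨0, by rw [mul_zero]; exact hx0, ?_⟩)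
    rw [eflat_app, if_pos le_rfl]
  · rw [if_neg (not_le.mpr hx0)]
    rcases le_or_gt x dd with hxd | hxd
    · rw [if_pos hxd]
      refine le_antisymm (h.2 ?_) (h.1 ⟨1, by rwa [mul_one], (eflat_app_one u).symm⟩)
      rintro s ⟨c, hc, rfl⟩
      rw [eflat_app]
      rcases le_or_gt c 0 with hc0 | hc0
      · exfalso
        have : dd * c ≤ 0 := mul_nonpos_of_nonneg_of_nonpos hdd.le hc0
        linarith
      · rw [if_neg (not_le.mpr hc0)]
        split_ifs
        · exact le_rfl
        · exact bot_le
    · rw [if_neg (not_le.mpr hxd)]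
      refine le_bot_iff.mp (h.2 ?_)
      rintro s ⟨c, hc, rfl⟩
      rw [eflat_app]
      rcases le_or_gt c 0 with hc0 | hc0
      · exfalso
        have : dd * c ≤ 0 := mul_nonpos_of_nonneg_of_nonpos hdd.le hc0
        linarith
      · rw [if_neg (not_le.mpr hc0)]
        rcases le_or_gt c 1 with hc1 | hc1
        · exfalso
          have : dd * c ≤ dd * 1 := mul_le_mul_of_nonneg_left hc1 hdd.le
          rw [mul_one] at this
          linarith
        · rw [if_neg (not_le.mpr hc1)]

include hle hzero in
lemma eflat_nonneg (u : B) : (0 : DBFlat D B) ≤ eflat u := by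
  rw [hle]
  intro a
  rw [hzero]
  rcases le_or_gt a 0 with ha | ha
  · simp [eflat_app, ha]
  · simp [eflat_app, not_le.mpr ha]

include hle hzero hmul in
lemma eflat_idem (u : B) : IsIdempotentElem ((eflat u) : DBFlat D B) := by
  have hnn := eflat_nonneg hle hzero (u := u)
  have hkey : ∀ b : D, 0 < b → ((eflat u) : DBFlat D B).1 b ≤ u := by
    intro b hb
    rw [eflat_app, if_neg (not_le.mpr hb)]
    split_ifs
    · exact le_rfl
    · exact bot_le
  unfold IsIdempotentElem
  apply Subtype.ext
  funext x
  have h := hmul (eflat u) (eflat u) hnn hnn x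
  have hposes : ∀ b₁ b₂ : D, 0 ≤ b₁ → 0 ≤ b₂ → 0 < x → x ≤ b₁ * b₂ → 0 < b₁ ∧ 0 < b₂ := by
    intro b₁ b₂ h1 h2 hx hxb
    constructor
    · rcases lt_or_eq_of_le h1 with h | h
      · exact h
      · exfalso; rw [← h, zero_mul] at hxb; linarith
    · rcases lt_or_eq_of_le h2 with h | h
      · exact h
      · exfalso; rw [← h, mul_zero] at hxb; linarith
  rcases le_or_gt x 0 with hx0 | hx0
  · rw [eflat_app, if_pos hx0]
    refine le_antisymm le_top (h.1 ⟨0, 0, le_rfl, le_rfl, by rw [mul_zero]; exact hx0, ?_⟩)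
    rw [eflat_app, if_pos le_rfl, top_inf_eq]
  · rcases le_or_gt x 1 with hx1 | hx1
    · rw [eflat_app, if_neg (not_le.mpr hx0), if_pos hx1]
      refine le_antisymm (h.2 ?_) (h.1 ⟨1, 1, zero_le_one, zero_le_one, by rwa [mul_one], ?_⟩)
      · rintro s ⟨b₁, b₂, h1, h2, hxb, rfl⟩
        obtain ⟨hb1, _⟩ := hposes b₁ b₂ h1 h2 hx0 hxb
        exact le_trans inf_le_left (hkey b₁ hb1)
      · rw [eflat_app_one, inf_idem]
    · rw [eflat_app, if_neg (not_le.mpr hx0), if_neg (not_le.mpr hx1)]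
      refine le_bot_iff.mp (h.2 ?_)
      rintro s ⟨b₁, b₂, h1, h2, hxb, rfl⟩
      obtain ⟨hb1, hb2⟩ := hposes b₁ b₂ h1 h2 (by linarith) hxb
      rcases le_or_gt b₁ 1 with hb11 | hb11
      · rcases le_or_gt b₂ 1 with hb21 | hb21
        · exfalso
          have : b₁ * b₂ ≤ 1 := mul_le_one₀ hb11 hb2.le hb21
          linarith
        · refine le_trans inf_le_right ?_
          rw [eflat_app, if_neg (not_le.mpr hb2), if_neg (not_le.mpr hb21)]
      · refine le_trans inf_le_left ?_
        rw [eflat_app, if_neg (not_le.mpr hb1), if_neg (not_le.mpr hb11)]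

include hsmul in
lemma smul_le_app (a : D) (ha : 0 < a) (f : DBFlat D B) (c x : D) (h : x ≤ a * c) :
    f.1 c ≤ (a • f).1 x := (hsmul a ha f x).1 ⟨c, h, rfl⟩

include hsmul in
lemma smul_app_le (a : D) (ha : 0 < a) (g : DBFlat D B) (b : D) :
    (a • g).1 (a * b) ≤ g.1 b := by
  refine (hsmul a ha g (a * b)).2 ?_
  rintro s ⟨c, hc, rfl⟩
  exact fanti g (le_of_mul_le_mul_left hc ha)

end DB2
end St16
namespace St16
section Part1
variable {D B : Type*} [CommRing D] [LinearOrder D] [IsStrictOrderedRing D] [BooleanAlgebra B]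
variable [CommRing (DBFlat D B)] [Algebra D (DBFlat D B)] [Lattice (DBFlat D B)]
variable {p : B → B → Prop} (hp : IsDeVriesProx B p)
variable (hle : ∀ f g : DBFlat D B, f ≤ g ↔ ∀ a : D, f.1 a ≤ g.1 a)
variable (hzero : ((0 : DBFlat D B)).1 = fun a : D => if a ≤ 0 then (⊤ : B) else ⊥)
variable (hone : ((1 : DBFlat D B)).1 = fun a : D => if a ≤ 1 then (⊤ : B) else ⊥)
variable (hadd : ∀ f g : DBFlat D B, ∀ a : D,
      IsLUB {x : B | ∃ b₁ b₂ : D, a ≤ b₁ + b₂ ∧ x = f.1 b₁ ⊓ g.1 b₂} ((f + g).1 a))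
variable (hsmul : ∀ b : D, 0 < b → ∀ (f : DBFlat D B) (a : D),
      IsLUB {x : B | ∃ c : D, a ≤ b * c ∧ x = f.1 c} ((b • f).1 a))
variable (hmul : ∀ f g : DBFlat D B, 0 ≤ f → 0 ≤ g → ∀ a : D,
      IsLUB {x : B | ∃ b₁ b₂ : D, 0 ≤ b₁ ∧ 0 ≤ b₂ ∧ a ≤ b₁ * b₂ ∧ x = f.1 b₁ ⊓ g.1 b₂}
        ((f * g).1 a))

include hp hle hzero hone hadd hsmul hmul in
lemma part1 : IsProximity D (DBFlat D B) (fun f g => ∀ b : D, p (f.1 b) (g.1 b)) := by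
  classical
  refine ⟨⟨?p1a, ?p1b⟩, ?p2, ?p3, ?p4, ?p5, ?p6, ?p7, ?p8, ?p9, ?p10, ?p11⟩
  case p1a =>
    intro b
    rw [hzero]
    by_cases hb : b ≤ 0 <;> simp [hb, hp.1.1, hp.1.2]
  case p1b =>
    intro b
    rw [hone]
    by_cases hb : b ≤ 1 <;> simp [hb, hp.1.1, hp.1.2]
  case p2 =>
    intro s t h
    rw [hle]
    intro a
    exact hp.2.1 _ _ (h a)
  case p3 =>
    intro s t u v h1 h2 h3 b
    exact psq hp ((hle s t).mp h1 b) (h2 b) ((hle u v).mp h3 b)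
  case p4 =>
    intro s t u h1 h2 b
    rw [inf_app hle]
    exact pinf2 hp (h1 b) (h2 b)
  case p5 =>
    intro s t h b
    obtain ⟨c₁, hc₁, hcon₁⟩ := (fdo s).rlim (-b)
    obtain ⟨c₂, hc₂, hcon₂⟩ := (fdo t).rlim (-b)
    set c := min c₁ c₂ with hcdef
    have hcmin : -b < c := lt_min hc₁ hc₂
    have hs : ∀ y, -b < y → y ≤ c → s.1 y = s.1 c := by
      intro y hy hyc
      rw [hcon₁ y hy (hyc.trans (min_le_left _ _)), hcon₁ c hcmin (min_le_left _ _)]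
    have ht : ∀ y, -b < y → y ≤ c → t.1 y = t.1 c := by
      intro y hy hyc
      rw [hcon₂ y hy (hyc.trans (min_le_right _ _)), hcon₂ c hcmin (min_le_right _ _)]
    rw [neg_app hzero hadd t b c hcmin ht, neg_app hzero hadd s b c hcmin hs]
    exact pcompl hp (h c)
  case p6 =>
    intro s t u v h1 h2 b
    refine ptransfer hp (σ := ((fdo s).T ×ˢ (fdo u).T).filter (fun q => b ≤ q.1 + q.2))
      (F := fun q => s.1 q.1 ⊓ u.1 q.2) (hadd s u b) ?_ ?_ ?_
    · intro q hq
      rw [Finset.mem_filter] at hq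
      exact ⟨q.1, q.2, hq.2, rfl⟩
    · rintro x ⟨b₁, b₂, hb, rfl⟩
      by_cases hb1 : s.1 b₁ = ⊥
      · left; rw [hb1, bot_inf_eq]
      by_cases hb2 : u.1 b₂ = ⊥
      · left; rw [hb2, inf_bot_eq]
      right
      obtain ⟨s', hs'T, hbs', hvs'⟩ := (fdo s).rep b₁ hb1
      obtain ⟨t', ht'T, hbt', hvt'⟩ := (fdo u).rep b₂ hb2
      refine ⟨(s', t'), ?_, ?_⟩
      · rw [Finset.mem_filter, Finset.mem_product]
        exact ⟨⟨hs'T, ht'T⟩, by dsimp only; linarith⟩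
      · dsimp only
        rw [hvs', hvt']
    · intro q hq
      rw [Finset.mem_filter] at hq
      exact psq hp le_rfl (pmeetmono hp (h1 q.1) (h2 q.2))
        ((hadd t v b).1 ⟨q.1, q.2, hq.2, rfl⟩)
  case p7 =>
    intro s t a ha h b
    refine ptransfer hp (σ := (fdo s).T.filter (fun c => b ≤ a * c))
      (F := fun c => s.1 c) (hsmul a ha s b) ?_ ?_ ?_
    · intro c hc
      rw [Finset.mem_filter] at hc
      exact ⟨c, hc.2, rfl⟩
    · rintro x ⟨c, hc, rfl⟩
      by_cases hb1 : s.1 c = ⊥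
      · left; exact hb1
      right
      obtain ⟨s', hs'T, hcs', hvs'⟩ := (fdo s).rep c hb1
      refine ⟨s', ?_, le_of_eq hvs'.symm⟩
      rw [Finset.mem_filter]
      exact ⟨hs'T, hc.trans (mul_le_mul_of_nonneg_left hcs' ha.le)⟩
    · intro c hc
      rw [Finset.mem_filter] at hc
      exact psq hp le_rfl (h c) (smul_le_app hsmul a ha t c b hc.2)
  case p8 =>
    rintro s t ⟨a, ha, h⟩ b
    exact psq hp (smul_le_app hsmul a ha s b (a * b) le_rfl) (h (a * b))
      (smul_app_le hsmul a ha t b)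
  case p9 =>
    intro s t u v h0s h0t h0u h0v h1 h2 b
    refine ptransfer hp
      (σ := ((fdo s).T ×ˢ (fdo u).T).filter (fun q => 0 ≤ q.1 ∧ 0 ≤ q.2 ∧ b ≤ q.1 * q.2))
      (F := fun q => s.1 q.1 ⊓ u.1 q.2) (hmul s u h0s h0u b) ?_ ?_ ?_
    · intro q hq
      rw [Finset.mem_filter] at hq
      exact ⟨q.1, q.2, hq.2.1, hq.2.2.1, hq.2.2.2, rfl⟩
    · rintro x ⟨b₁, b₂, hb₁, hb₂, hb, rfl⟩
      by_cases hq1 : s.1 b₁ = ⊥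
      · left; rw [hq1, bot_inf_eq]
      by_cases hq2 : u.1 b₂ = ⊥
      · left; rw [hq2, inf_bot_eq]
      right
      obtain ⟨s', hs'T, hbs', hvs'⟩ := (fdo s).rep b₁ hq1
      obtain ⟨t', ht'T, hbt', hvt'⟩ := (fdo u).rep b₂ hq2
      refine ⟨(s', t'), ?_, ?_⟩
      · rw [Finset.mem_filter, Finset.mem_product]
        refine ⟨⟨hs'T, ht'T⟩, hb₁.trans hbs', hb₂.trans hbt', ?_⟩
        exact hb.trans (mul_le_mul hbs' hbt' hb₂ (hb₁.trans hbs'))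
      · dsimp only
        rw [hvs', hvt']
    · intro q hq
      rw [Finset.mem_filter] at hq
      exact psq hp le_rfl (pmeetmono hp (h1 q.1) (h2 q.2))
        ((hmul t v h0t h0v b).1 ⟨q.1, q.2, hq.2.1, hq.2.2.1, hq.2.2.2, rfl⟩)
  case p10 =>
    intro s t h
    have hT : ((fdo s).T ∪ (fdo t).T).Nonempty := (fdo s).ne.inl
    obtain ⟨m, c, hc, hcT, hTc⟩ := enumT _ hT
    have hsub1 : (fdo s).T ⊆ (fdo s).T ∪ (fdo t).T := Finset.subset_union_left
    have hsub2 : (fdo t).T ⊆ (fdo s).T ∪ (fdo t).T := Finset.subset_union_right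
    choose w hw1 hw2 using fun k => hp.2.2.2.2.2.1 _ _ (h (c k))
    set v : Fin (m+1) → B := fun k => (Finset.univ.filter (· ≤ k)).inf w with hv
    have vanti : Antitone v := by
      intro k l hkl
      refine Finset.inf_mono ?_
      intro j hj
      rw [Finset.mem_filter] at hj ⊢
      exact ⟨hj.1, hj.2.trans hkl⟩
    have hc0le : ∀ i, c 0 ≤ c i := fun i => hc.le_iff_le.mpr (Fin.zero_le i)
    set hfun : D → B := fun x => (Finset.univ.filter (fun k => x ≤ c k)).sup v with hfdef
    have hval : ∀ (x : D) (k₀ : Fin (m+1)), x ≤ c k₀ → (∀ k, x ≤ c k → k₀ ≤ k) →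
        hfun x = v k₀ := by
      intro x k₀ hx hmin
      refine le_antisymm (Finset.sup_le ?_) (Finset.le_sup ?_)
      · intro k hk
        rw [Finset.mem_filter] at hk
        exact vanti (hmin k hk.2)
      · rw [Finset.mem_filter]
        exact ⟨Finset.mem_univ _, hx⟩
    have hv0top : v 0 = w 0 := by
      have heq : Finset.univ.filter (· ≤ (0 : Fin (m+1))) = {0} := by
        ext j; simp [Fin.le_zero_iff]
      calc v 0 = (Finset.univ.filter (· ≤ (0 : Fin (m+1)))).inf w := rfl
        _ = ({0} : Finset (Fin (m+1))).inf w := by rw [heq]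
        _ = w 0 := Finset.inf_singleton
    have hw0top : w 0 = ⊤ := by
      have hsc0 : s.1 (c 0) = ⊤ := by
        refine (fdo s).top _ ?_
        intro tt htt
        obtain ⟨i, rfl⟩ := hTc tt (hsub1 htt)
        exact hc0le i
      refine le_antisymm le_top ?_
      rw [← hsc0]
      exact hp.2.1 _ _ (hw1 0)
    have hflat : IsFlatFn D B hfun := by
      refine isFlatFn_of (nontriv D B) hfun _ hT ?_ ?_ ?_ ?_
      · intro x y hxy
        refine Finset.sup_mono ?_
        intro k hk
        rw [Finset.mem_filter] at hk ⊢
        exact ⟨hk.1, hxy.trans hk.2⟩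
      · intro x hx
        have h0 : x ≤ c 0 := hx _ (hcT 0)
        refine le_antisymm le_top ?_
        have : v 0 ≤ hfun x := Finset.le_sup (by rw [Finset.mem_filter]; exact ⟨Finset.mem_univ _, h0⟩)
        rw [hv0top, hw0top] at this
        exact this
      · intro x y hxy
        have : Finset.univ.filter (fun k => x ≤ c k) = Finset.univ.filter (fun k => y ≤ c k) := by
          refine Finset.filter_congr ?_
          intro k _
          simpa using hxy (c k) (hcT k)
        rw [hfdef]
        dsimp only
        rw [this]
      · intro x hx
        have : Finset.univ.filter (fun k => x ≤ c k) = ∅ := by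
          refine Finset.filter_false_of_mem ?_
          intro k _
          exact hx (c k) (hcT k)
        rw [hfdef]
        dsimp only
        rw [this, Finset.sup_empty]
    refine ⟨⟨hfun, hflat⟩, fun b => ?_, fun b => ?_⟩
    · -- p (s.1 b) (hfun b)
      show p (s.1 b) (hfun b)
      by_cases hex : ∃ k, b ≤ c k
      · obtain ⟨i0, hi0⟩ := hex
        have hne : (Finset.univ.filter (fun k => b ≤ c k)).Nonempty := ⟨i0, by simpa using hi0⟩
        set k₀ := (Finset.univ.filter (fun k => b ≤ c k)).min' hne with hk₀
        have hk₀mem : b ≤ c k₀ := by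
          have := Finset.min'_mem _ hne; rw [Finset.mem_filter] at this; exact this.2
        have hk₀min : ∀ k, b ≤ c k → k₀ ≤ k := fun k hk =>
          Finset.min'_le _ _ (by rw [Finset.mem_filter]; exact ⟨Finset.mem_univ _, hk⟩)
        rw [hval b k₀ hk₀mem hk₀min]
        refine pinfF hp ?_
        intro j hj
        rw [Finset.mem_filter] at hj
        rcases lt_or_eq_of_le hj.2 with hjlt | hjeq
        · have hcj : c j < b := by
            by_contra hcon
            push_neg at hcon
            exact absurd (hk₀min j hcon) (not_le.mpr hjlt)
          exact psq hp ((fdo s).anti hcj.le) (hw1 j) le_rfl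
        · have hcell : s.1 b = s.1 (c k₀) := by
            refine (fdo s).cell b (c k₀) ?_
            intro tt htt
            obtain ⟨i, rfl⟩ := hTc tt (hsub1 htt)
            constructor
            · intro hbi; exact hc.le_iff_le.mpr (hk₀min i hbi)
            · intro hji; exact hk₀mem.trans hji
          rw [hjeq, hcell]
          exact hw1 k₀
      · push_neg at hex
        have h1 : hfun b = ⊥ := by
          have : Finset.univ.filter (fun k => b ≤ c k) = ∅ :=
            Finset.filter_false_of_mem (fun k _ => not_le.mpr (hex k))
          rw [hfdef]; dsimp only; rw [this, Finset.sup_empty]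
        have h2 : s.1 b = ⊥ := by
          refine (fdo s).bot b ?_
          intro tt htt
          obtain ⟨i, rfl⟩ := hTc tt (hsub1 htt)
          exact not_le.mpr (hex i)
        rw [h1, h2]
        exact hp.1.1
    · -- p (hfun b) (t.1 b)
      show p (hfun b) (t.1 b)
      by_cases hex : ∃ k, b ≤ c k
      · obtain ⟨i0, hi0⟩ := hex
        have hne : (Finset.univ.filter (fun k => b ≤ c k)).Nonempty := ⟨i0, by simpa using hi0⟩
        set k₀ := (Finset.univ.filter (fun k => b ≤ c k)).min' hne with hk₀
        have hk₀mem : b ≤ c k₀ := by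
          have := Finset.min'_mem _ hne; rw [Finset.mem_filter] at this; exact this.2
        have hk₀min : ∀ k, b ≤ c k → k₀ ≤ k := fun k hk =>
          Finset.min'_le _ _ (by rw [Finset.mem_filter]; exact ⟨Finset.mem_univ _, hk⟩)
        rw [hval b k₀ hk₀mem hk₀min]
        have hinfle : v k₀ ≤ w k₀ :=
          Finset.inf_le (by rw [Finset.mem_filter]; exact ⟨Finset.mem_univ _, le_rfl⟩)
        have hcell : t.1 (c k₀) = t.1 b := by
          refine ((fdo t).cell b (c k₀) ?_).symm
          intro tt htt
          obtain ⟨i, rfl⟩ := hTc tt (hsub2 htt)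
          constructor
          · intro hbi; exact hc.le_iff_le.mpr (hk₀min i hbi)
          · intro hji; exact hk₀mem.trans hji
        exact psq hp hinfle (hw2 k₀) (le_of_eq hcell)
      · push_neg at hex
        have h1 : hfun b = ⊥ := by
          have : Finset.univ.filter (fun k => b ≤ c k) = ∅ :=
            Finset.filter_false_of_mem (fun k _ => not_le.mpr (hex k))
          rw [hfdef]; dsimp only; rw [this, Finset.sup_empty]
        rw [h1]
        exact pbot hp _
  case p11 =>
    intro s hs
    have h0s : (0:DBFlat D B) ≤ s := hs.le
    have hne : s ≠ 0 := hs.ne'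
    have hpt : ∀ x : D, x ≤ 0 → s.1 x = ⊤ := by
      intro x hx
      have := (hle 0 s).mp h0s x
      rw [hzero] at this
      simp only [hx, if_true] at this
      exact le_antisymm le_top this
    have hex : ∃ b₀ : D, 0 < b₀ ∧ s.1 b₀ ≠ ⊥ := by
      by_contra hc
      push_neg at hc
      apply hne
      apply Subtype.ext
      funext x
      rw [hzero]
      rcases le_or_gt x 0 with hx | hx
      · simp only [hx, if_true]
        exact hpt x hx
      · simp only [not_le.mpr hx, if_false]
        exact hc x hx
    obtain ⟨b₀, hb₀, hsb⟩ := hex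
    obtain ⟨wv, hwne, hpw⟩ := hp.2.2.2.2.2.2 _ hsb
    set tt : DBFlat D B := ⟨blockFn wv b₀, blockFn_flat (nontriv D B) wv b₀ hb₀⟩ with htt
    have htt0 : (0:DBFlat D B) ≤ tt := by
      rw [hle]
      intro a
      rw [hzero]
      rcases le_or_gt a 0 with ha | ha
      · simp only [ha, if_true]
        show (⊤:B) ≤ blockFn wv b₀ a
        rw [blockFn, if_pos ha]
      · simp only [not_le.mpr ha, if_false]
        exact bot_le
    have httne : tt ≠ 0 := by
      intro heq
      apply hwne
      have : tt.1 b₀ = (0:DBFlat D B).1 b₀ := by rw [heq]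
      rw [hzero] at this
      simp only [not_le.mpr hb₀, if_false] at this
      rw [← this]
      show wv = blockFn wv b₀ b₀
      symm
      rw [blockFn, if_neg (not_le.mpr hb₀), if_pos le_rfl]
    refine ⟨tt, lt_of_le_of_ne htt0 (Ne.symm httne), fun b => ?_⟩
    show p (blockFn wv b₀ b) (s.1 b)
    rw [blockFn]
    rcases le_or_gt b 0 with hb | hb
    · rw [if_pos hb, hpt b hb]
      exact hp.1.2
    · rw [if_neg (not_le.mpr hb)]
      rcases le_or_gt b b₀ with hbb | hbb
      · rw [if_pos hbb]
        exact psq hp le_rfl hpw (fanti s hbb)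
      · rw [if_neg (not_le.mpr hbb)]
        exact pbot hp _

end Part1
end St16
namespace St16
section QRules
variable {D B : Type*} [CommRing D] [LinearOrder D] [IsStrictOrderedRing D] [BooleanAlgebra B]
variable [CommRing (DBFlat D B)] [Algebra D (DBFlat D B)] [Lattice (DBFlat D B)]
variable {p : B → B → Prop} (hp : IsDeVriesProx B p)
variable (hle : ∀ f g : DBFlat D B, f ≤ g ↔ ∀ a : D, f.1 a ≤ g.1 a)
variable (hzero : ((0 : DBFlat D B)).1 = fun a : D => if a ≤ 0 then (⊤ : B) else ⊥)
variable (hone : ((1 : DBFlat D B)).1 = fun a : D => if a ≤ 1 then (⊤ : B) else ⊥)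
variable (hadd : ∀ f g : DBFlat D B, ∀ a : D,
      IsLUB {x : B | ∃ b₁ b₂ : D, a ≤ b₁ + b₂ ∧ x = f.1 b₁ ⊓ g.1 b₂} ((f + g).1 a))
variable (hsmul : ∀ b : D, 0 < b → ∀ (f : DBFlat D B) (a : D),
      IsLUB {x : B | ∃ c : D, a ≤ b * c ∧ x = f.1 c} ((b • f).1 a))
variable (hmul : ∀ f g : DBFlat D B, 0 ≤ f → 0 ≤ g → ∀ a : D,
      IsLUB {x : B | ∃ b₁ b₂ : D, 0 ≤ b₁ ∧ 0 ≤ b₂ ∧ a ≤ b₁ * b₂ ∧ x = f.1 b₁ ⊓ g.1 b₂}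
        ((f * g).1 a))
variable {q : DBFlat D B → DBFlat D B → Prop} (hq : IsProximity D (DBFlat D B) q)

include hle hzero hadd in
lemma neg_sup (s u : DBFlat D B) : -(s ⊔ u) = (-s) ⊓ (-u) := by
  apply Subtype.ext
  funext x
  obtain ⟨c₁, hc₁, hcon₁⟩ := (fdo s).rlim (-x)
  obtain ⟨c₂, hc₂, hcon₂⟩ := (fdo u).rlim (-x)
  set c := min c₁ c₂ with hcdef
  have hcmin : -x < c := lt_min hc₁ hc₂
  have hconS : ∀ y, -x < y → y ≤ c → s.1 y = s.1 c := by
    intro y hy hyc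
    rw [hcon₁ y hy (hyc.trans (min_le_left _ _)), hcon₁ c hcmin (min_le_left _ _)]
  have hconU : ∀ y, -x < y → y ≤ c → u.1 y = u.1 c := by
    intro y hy hyc
    rw [hcon₂ y hy (hyc.trans (min_le_right _ _)), hcon₂ c hcmin (min_le_right _ _)]
  have hconSU : ∀ y, -x < y → y ≤ c → (s ⊔ u).1 y = (s ⊔ u).1 c := by
    intro y hy hyc
    rw [sup_app hle, sup_app hle, hconS y hy hyc, hconU y hy hyc]
  rw [show ((-s) ⊓ (-u)).1 x = (-s).1 x ⊓ (-u).1 x from inf_app hle _ _ x,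
    neg_app hzero hadd (s ⊔ u) x c hcmin hconSU,
    neg_app hzero hadd s x c hcmin hconS,
    neg_app hzero hadd u x c hcmin hconU,
    sup_app hle, compl_sup]

include hq hzero hone hadd hsmul in
lemma qconst (a : D) : q (a • (1 : DBFlat D B)) (a • 1) := by
  rcases lt_trichotomy 0 a with ha | ha | ha
  · exact hq.2.2.2.2.2.2.1 _ _ a ha hq.1.2
  · subst ha
    rw [zero_smul]
    exact hq.1.1
  · have hrepr : a • (1 : DBFlat D B) = -((-a) • 1) := by rw [← neg_smul, neg_neg]
    rw [hrepr]
    exact hq.2.2.2.2.1 _ _ (hq.2.2.2.2.2.2.1 _ _ (-a) (by linarith) hq.1.2)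

include hq hle hzero hadd in
lemma qjoin2 {s u v : DBFlat D B} (h1 : q s v) (h2 : q u v) : q (s ⊔ u) v := by
  have g1 := hq.2.2.2.2.1 _ _ h1
  have g2 := hq.2.2.2.2.1 _ _ h2
  have g3 := hq.2.2.2.1 _ _ _ g1 g2
  rw [← neg_sup hle hzero hadd] at g3
  have g4 := hq.2.2.2.2.1 _ _ g3
  rwa [neg_neg, neg_neg] at g4

include hq hle hzero hone hadd hsmul in
lemma qjoinconst {s t : DBFlat D B} (h : q s t) (a : D) :
    q (s ⊔ a • 1) (t ⊔ a • 1) :=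
  qjoin2 hle hzero hadd hq
    (hq.2.2.1 _ _ _ _ le_rfl h le_sup_left)
    (hq.2.2.1 _ _ _ _ le_rfl (qconst hzero hone hadd hsmul hq a) le_sup_right)

include hq hzero hone hadd hsmul in
lemma qmeetconst {s t : DBFlat D B} (h : q s t) (a : D) :
    q (s ⊓ a • 1) (t ⊓ a • 1) :=
  hq.2.2.2.1 _ _ _
    (hq.2.2.1 _ _ _ _ inf_le_left h le_rfl)
    (hq.2.2.1 _ _ _ _ inf_le_right (qconst hzero hone hadd hsmul hq a) le_rfl)

include hq hle hzero hone hadd hsmul hmul in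
lemma qsubr
    (hiff : ∀ x y : DBFlat D B, IsIdempotentElem x → IsIdempotentElem y →
      (q x y ↔ ∀ b : D, p (x.1 b) (y.1 b)))
    (f g : DBFlat D B) (h : q f g) (b : D) : p (f.1 b) (g.1 b) := by
  obtain ⟨cc, hcc, hcon⟩ := (fdo g).llim b
  set δ := b - cc with hδdef
  have hδ : 0 < δ := sub_pos.mpr hcc
  have h1 : q (f ⊔ cc • 1) (g ⊔ cc • 1) := qjoinconst hle hzero hone hadd hsmul hq h cc
  have h2 : q ((f ⊔ cc • 1) + (-cc) • 1) ((g ⊔ cc • 1) + (-cc) • 1) :=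
    hq.2.2.2.2.2.1 _ _ _ _ h1 (qconst hzero hone hadd hsmul hq (-cc))
  have h3 : q (((f ⊔ cc • 1) + (-cc) • 1) ⊓ δ • 1) (((g ⊔ cc • 1) + (-cc) • 1) ⊓ δ • 1) :=
    qmeetconst hzero hone hadd hsmul hq h2 δ
  -- value of the truncations
  have happ : ∀ u : DBFlat D B, ∀ x : D,
      (((u ⊔ cc • 1) + (-cc) • 1) ⊓ δ • 1).1 x
        = (u.1 (x + cc) ⊔ (if x ≤ 0 then (⊤:B) else ⊥)) ⊓ (if x ≤ δ then (⊤:B) else ⊥) := by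
    intro u x
    rw [inf_app hle, add_const_app hzero hone hadd hsmul, sub_neg_eq_add,
      sup_app hle, const_app hzero hone hadd hsmul, const_app hzero hone hadd hsmul]
    congr 2
    by_cases hx : x ≤ 0
    · rw [if_pos hx, if_pos (by linarith)]
    · rw [if_neg hx, if_neg (by intro hcon; exact hx (by linarith))]
  have hX : δ • eflat (f.1 b) ≤ ((f ⊔ cc • 1) + (-cc) • 1) ⊓ δ • 1 := by
    rw [hle]
    intro x
    rw [smul_block_app hsmul _ _ hδ, happ f x, blockFn]
    rcases le_or_gt x 0 with hx0 | hx0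
    · rw [if_pos hx0, if_pos hx0, if_pos (by linarith : x ≤ δ)]
      simp
    · rw [if_neg (not_le.mpr hx0), if_neg (not_le.mpr hx0)]
      rcases le_or_gt x δ with hxδ | hxδ
      · rw [if_pos hxδ, if_pos hxδ, sup_bot_eq, inf_top_eq]
        exact fanti f (by linarith)
      · rw [if_neg (not_le.mpr hxδ), if_neg (not_le.mpr hxδ)]
        exact bot_le
  have hY : ((g ⊔ cc • 1) + (-cc) • 1) ⊓ δ • 1 ≤ δ • eflat (g.1 b) := by
    rw [hle]
    intro x
    rw [smul_block_app hsmul _ _ hδ, happ g x, blockFn]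
    rcases le_or_gt x 0 with hx0 | hx0
    · simp only [hx0, if_true]
      exact le_top
    · rw [if_neg (not_le.mpr hx0), if_neg (not_le.mpr hx0)]
      rcases le_or_gt x δ with hxδ | hxδ
      · rw [if_pos hxδ, if_pos hxδ, sup_bot_eq, inf_top_eq]
        exact le_of_eq (hcon (x + cc) (by linarith) (by linarith))
      · rw [if_neg (not_le.mpr hxδ), if_neg (not_le.mpr hxδ)]
        exact inf_le_right
  have h4 : q (δ • eflat (f.1 b)) (δ • eflat (g.1 b)) := hq.2.2.1 _ _ _ _ hX h3 hY
  have h5 : q (eflat (f.1 b)) (eflat (g.1 b)) :=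
    hq.2.2.2.2.2.2.2.1 _ _ ⟨δ, hδ, h4⟩
  have h6 := (hiff _ _ (eflat_idem hle hzero hmul _) (eflat_idem hle hzero hmul _)).mp h5 1
  rwa [eflat_app_one, eflat_app_one] at h6

end QRules
end St16
namespace St16
section Decomp
variable {D B : Type*} [CommRing D] [LinearOrder D] [IsStrictOrderedRing D] [BooleanAlgebra B]
variable [CommRing (DBFlat D B)] [Algebra D (DBFlat D B)] [Lattice (DBFlat D B)]
variable {p : B → B → Prop} (hp : IsDeVriesProx B p)
variable (hle : ∀ f g : DBFlat D B, f ≤ g ↔ ∀ a : D, f.1 a ≤ g.1 a)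
variable (hzero : ((0 : DBFlat D B)).1 = fun a : D => if a ≤ 0 then (⊤ : B) else ⊥)
variable (hone : ((1 : DBFlat D B)).1 = fun a : D => if a ≤ 1 then (⊤ : B) else ⊥)
variable (hadd : ∀ f g : DBFlat D B, ∀ a : D,
      IsLUB {x : B | ∃ b₁ b₂ : D, a ≤ b₁ + b₂ ∧ x = f.1 b₁ ⊓ g.1 b₂} ((f + g).1 a))
variable (hsmul : ∀ b : D, 0 < b → ∀ (f : DBFlat D B) (a : D),
      IsLUB {x : B | ∃ c : D, a ≤ b * c ∧ x = f.1 c} ((b • f).1 a))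
variable (hmul : ∀ f g : DBFlat D B, 0 ≤ f → 0 ≤ g → ∀ a : D,
      IsLUB {x : B | ∃ b₁ b₂ : D, 0 ≤ b₁ ∧ 0 ≤ b₂ ∧ a ≤ b₁ * b₂ ∧ x = f.1 b₁ ⊓ g.1 b₂}
        ((f * g).1 a))

/-- partial sums of the canonical decomposition of a flat element along a grid -/
def Psum (f : DBFlat D B) (C : ℕ → D) : ℕ → DBFlat D B :=
  fun j => Nat.rec (motive := fun _ => DBFlat D B) (C 0 • 1)
    (fun k acc => acc + (C (k+1) - C k) • eflat (f.1 (C (k+1)))) j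

lemma Psum_zero (f : DBFlat D B) (C : ℕ → D) : Psum f C 0 = C 0 • 1 := rfl

lemma Psum_succ (f : DBFlat D B) (C : ℕ → D) (j : ℕ) :
    Psum f C (j+1) = Psum f C j + (C (j+1) - C j) • eflat (f.1 (C (j+1))) := rfl

include hle hzero hone hadd hsmul in
lemma psum_inv (f : DBFlat D B) (C : ℕ → D) (hCmono : Monotone C)
    (hkey : ∀ j, C j < C (j+1) → ∀ k, k < j → C k < C j) (j : ℕ) :
    (∀ x, x ≤ C 0 → (Psum f C j).1 x = ⊤) ∧
    (∀ k, k < j → ∀ x, C k < x → x ≤ C (k+1) → (Psum f C j).1 x = f.1 (C (k+1))) ∧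
    (∀ x, C j < x → (Psum f C j).1 x = ⊥) := by
  classical
  induction j with
  | zero =>
      rw [Psum_zero]
      refine ⟨?_, ?_, ?_⟩
      · intro x hx
        rw [const_app hzero hone hadd hsmul, if_pos hx]
      · intro k hk; omega
      · intro x hx
        rw [const_app hzero hone hadd hsmul, if_neg (not_le.mpr hx)]
  | succ j ih =>
      obtain ⟨ih1, ih2, ih3⟩ := ih
      set P := Psum f C j with hP
      rcases eq_or_lt_of_le (hCmono (Nat.le_succ j)) with heq | hlt
      · have hzero' : C (j+1) - C j = 0 := by rw [← heq, sub_self]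
        have hPs : Psum f C (j+1) = P := by
          rw [Psum_succ, hzero', zero_smul, add_zero]
        rw [hPs]
        refine ⟨ih1, ?_, ?_⟩
        · intro k hk x hx1 hx2
          rcases Nat.lt_succ_iff_lt_or_eq.mp hk with hk' | rfl
          · exact ih2 k hk' x hx1 hx2
          · exfalso
            rw [← heq] at hx2
            linarith
        · intro x hx
          rw [← heq] at hx
          exact ih3 x hx
      · have hd : 0 < C (j+1) - C j := sub_pos.mpr hlt
        set w : DBFlat D B := (C (j+1) - C j) • eflat (f.1 (C (j+1))) with hw
        have hwapp : ∀ y : D, w.1 y = blockFn (f.1 (C (j+1))) (C (j+1) - C j) y :=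
          fun y => smul_block_app hsmul _ _ hd y
        have hwle : ∀ y : D, 0 < y → w.1 y ≤ f.1 (C (j+1)) := by
          intro y hy
          rw [hwapp, blockFn, if_neg (not_le.mpr hy)]
          split_ifs
          · exact le_rfl
          · exact bot_le
        have hwbot : ∀ y : D, C (j+1) - C j < y → w.1 y = ⊥ := by
          intro y hy
          rw [hwapp, blockFn, if_neg (not_le.mpr (by linarith)), if_neg (not_le.mpr hy)]
        have hPCj : f.1 (C (j+1)) ≤ P.1 (C j) := by
          rcases Nat.eq_zero_or_pos j with rfl | hj
          · rw [ih1 (C 0) le_rfl]; exact le_top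
          · obtain ⟨k, rfl⟩ := Nat.exists_eq_succ_of_ne_zero hj.ne'
            have hck : C k < C (k+1) := hkey (k+1) hlt k (lt_add_one k)
            rw [ih2 k (lt_add_one k) (C (k+1)) hck le_rfl]
            exact fanti f (hCmono (Nat.le_succ _))
        have hlub := fun x => hadd P w x
        have hPs : Psum f C (j+1) = P + w := Psum_succ f C j
        refine ⟨?_, ?_, ?_⟩
        · intro x hx
          rw [hPs]
          refine le_antisymm le_top ((hlub x).1 ⟨C 0, x - C 0, by linarith, ?_⟩)
          rw [ih1 (C 0) le_rfl, hwapp, blockFn, if_pos (by linarith : x - C 0 ≤ 0), top_inf_eq]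
        · intro k hk x hx1 hx2
          rw [hPs]
          rcases Nat.lt_succ_iff_lt_or_eq.mp hk with hk' | rfl
          · -- k < j
            have hPx : P.1 x = f.1 (C (k+1)) := ih2 k hk' x hx1 hx2
            refine le_antisymm ((hlub x).2 ?_) ((hlub x).1 ⟨x, 0, by linarith, ?_⟩)
            · rintro s ⟨b₁, b₂, hb, rfl⟩
              rcases le_or_gt b₂ 0 with hb2 | hb2
              · refine le_trans inf_le_left ?_
                rw [← hPx]
                exact fanti P (by linarith)
              · refine le_trans inf_le_right ?_
                exact (hwle b₂ hb2).trans
                  (fanti f (hCmono (Nat.succ_le_succ hk'.le)))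
            · rw [hPx, hwapp, blockFn, if_pos le_rfl, inf_top_eq]
          · -- k = j
            refine le_antisymm ((hlub x).2 ?_) ((hlub x).1 ⟨C k, x - C k, by linarith, ?_⟩)
            · rintro s ⟨b₁, b₂, hb, rfl⟩
              rcases le_or_gt b₁ (C k) with hb1 | hb1
              · refine le_trans inf_le_right (hwle b₂ (by linarith))
              · rw [ih3 b₁ hb1, bot_inf_eq]
                exact bot_le
            · rw [hwapp, blockFn, if_neg (not_le.mpr (by linarith : (0:D) < x - C k)),
                if_pos (by linarith : x - C k ≤ C (k+1) - C k)]
              exact (inf_eq_right.mpr hPCj).symm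
        · intro x hx
          rw [hPs]
          refine le_bot_iff.mp ((hlub x).2 ?_)
          rintro s ⟨b₁, b₂, hb, rfl⟩
          rcases le_or_gt b₁ (C j) with hb1 | hb1
          · rw [hwbot b₂ (by linarith), inf_bot_eq]
          · rw [ih3 b₁ hb1, bot_inf_eq]

variable {q : DBFlat D B → DBFlat D B → Prop}

include hp hle hzero hone hadd hsmul hmul in
lemma rsubq (hq : IsProximity D (DBFlat D B) q)
    (hiff : ∀ x y : DBFlat D B, IsIdempotentElem x → IsIdempotentElem y →
      (q x y ↔ ∀ b : D, p (x.1 b) (y.1 b)))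
    (f g : DBFlat D B) (hr : ∀ b : D, p (f.1 b) (g.1 b)) : q f g := by
  classical
  have hT : ((fdo f).T ∪ (fdo g).T).Nonempty := (fdo f).ne.inl
  obtain ⟨m, c, hc, hcT, hTc⟩ := enumT _ hT
  have hsub1 : (fdo f).T ⊆ (fdo f).T ∪ (fdo g).T := Finset.subset_union_left
  have hsub2 : (fdo g).T ⊆ (fdo f).T ∪ (fdo g).T := Finset.subset_union_right
  set C : ℕ → D := fun k => c ⟨min k m, by omega⟩ with hC
  have hCmono : Monotone C := by
    intro k l hkl
    exact (hc.le_iff_le).mpr (by simp only [Fin.mk_le_mk]; omega)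
  have hCofFin : ∀ i : Fin (m+1), C i.1 = c i := by
    intro i
    have hfin : (⟨min i.1 m, by omega⟩ : Fin (m+1)) = i := by
      have := i.2
      ext
      simp only []
      omega
    show c ⟨min i.1 m, by omega⟩ = c i
    exact congrArg c hfin
  have hkey : ∀ j, C j < C (j+1) → ∀ k, k < j → C k < C j := by
    intro j hlt k hk
    have hjm : j < m := by
      by_contra hc'
      push_neg at hc'
      have : min j m = min (j+1) m := by omega
      rw [hC] at hlt
      simp only [this] at hlt
      exact lt_irrefl _ hlt
    exact hc (by simp only [Fin.mk_lt_mk]; omega)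
  -- f and g agree with their partial sums
  have hfeq : ∀ (u : DBFlat D B), (fdo u).T ⊆ (fdo f).T ∪ (fdo g).T → u = Psum u C m := by
    intro u hsub
    apply Subtype.ext
    funext x
    obtain ⟨inv1, inv2, inv3⟩ := psum_inv hle hzero hone hadd hsmul u C hCmono hkey m
    by_cases hex : ∃ k : Fin (m+1), x ≤ c k
    · obtain ⟨i0, hi0⟩ := hex
      have hne : (Finset.univ.filter (fun k : Fin (m+1) => x ≤ c k)).Nonempty :=
        ⟨i0, by simpa using hi0⟩
      set j₀ := (Finset.univ.filter (fun k : Fin (m+1) => x ≤ c k)).min' hne with hj₀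
      have hj₀mem : x ≤ c j₀ := by
        have := Finset.min'_mem _ hne; rw [Finset.mem_filter] at this; exact this.2
      have hj₀min : ∀ k, x ≤ c k → j₀ ≤ k := fun k hk =>
        Finset.min'_le _ _ (by rw [Finset.mem_filter]; exact ⟨Finset.mem_univ _, hk⟩)
      have hcell : u.1 x = u.1 (c j₀) := by
        refine (fdo u).cell x (c j₀) ?_
        intro t ht
        obtain ⟨i, rfl⟩ := hTc t (hsub ht)
        constructor
        · intro hxi; exact hc.le_iff_le.mpr (hj₀min i hxi)
        · intro hji; exact hj₀mem.trans hji
      have hC0 : C 0 = c 0 := by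
        have hfin : (⟨min 0 m, by omega⟩ : Fin (m+1)) = 0 := by
          ext
          simp
        show c ⟨min 0 m, by omega⟩ = c 0
        exact congrArg c hfin
      rcases Fin.eq_zero_or_eq_succ j₀ with hj0 | ⟨i, hj0⟩
      · have hx0 : x ≤ C 0 := by
          rw [hC0, ← hj0]
          exact hj₀mem
        rw [inv1 x hx0, hcell]
        refine (fdo u).top _ ?_
        intro t ht
        obtain ⟨i, rfl⟩ := hTc t (hsub ht)
        calc c j₀ = c 0 := by rw [hj0]
          _ ≤ c i := hc.le_iff_le.mpr (Fin.zero_le i)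
      · -- j₀ = i.succ
        have hCsucc : C (i.1 + 1) = c j₀ := by
          rw [hj0]
          exact hCofFin i.succ
        have hCi : C i.1 = c i.castSucc := hCofFin i.castSucc
        have hxle : x ≤ C (i.1 + 1) := by rw [hCsucc]; exact hj₀mem
        have hxgt : C i.1 < x := by
          rw [hCi]
          by_contra hc'
          push_neg at hc'
          have := hj₀min i.castSucc hc'
          rw [hj0] at this
          exact absurd this (not_le.mpr (Fin.castSucc_lt_succ (i := i)))
        rw [inv2 i.1 (by omega) x hxgt hxle, hCsucc, hcell]
    · push_neg at hex
      have h1 : u.1 x = ⊥ := by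
        refine (fdo u).bot x ?_
        intro t ht
        obtain ⟨i, rfl⟩ := hTc t (hsub ht)
        exact not_le.mpr (hex i)
      have h2 : C m < x := by
        have hx := hex ⟨m, by omega⟩
        calc C m = c ⟨m, by omega⟩ := hCofFin ⟨m, by omega⟩
          _ < x := hx
      rw [h1, inv3 x h2]
  have hstep : ∀ j, q (Psum f C j) (Psum g C j) := by
    intro j
    induction j with
    | zero =>
        rw [Psum_zero, Psum_zero]
        exact qconst hzero hone hadd hsmul hq (C 0)
    | succ j ih =>
        rw [Psum_succ, Psum_succ]
        rcases eq_or_lt_of_le (hCmono (Nat.le_succ j)) with heq | hlt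
        · have h0 : C (j+1) - C j = 0 := by rw [← heq, sub_self]
          rw [h0, zero_smul, zero_smul, add_zero, add_zero]
          exact ih
        · have hd : 0 < C (j+1) - C j := sub_pos.mpr hlt
          have hqe : q (eflat (f.1 (C (j+1)))) (eflat (g.1 (C (j+1)))) := by
            refine (hiff _ _ (eflat_idem hle hzero hmul _) (eflat_idem hle hzero hmul _)).mpr ?_
            intro b
            rw [eflat_app, eflat_app]
            split_ifs
            · exact hp.1.2
            · exact hr (C (j+1))
            · exact hp.1.1
          exact hq.2.2.2.2.2.1 _ _ _ _ ih (hq.2.2.2.2.2.2.1 _ _ _ hd hqe)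
  have := hstep m
  rwa [← hfeq f hsub1, ← hfeq g hsub2] at this

end Decomp
end St16
/-- a de Vries proximity `≺` on `B` lifts pointwise to a proximity `≺♭` on
the de Vries power `D[B]♭`, and `≺♭` is the unique proximity whose restriction to the
idempotents corresponds to `≺` under the canonical isomorphism `e ↦ e♭`. -/
theorem statement16 (D B : Type*) [CommRing D] [LinearOrder D] [IsStrictOrderedRing D] [BooleanAlgebra B]
    (p : B → B → Prop) (hp : IsDeVriesProx B p)
    [CommRing (DBFlat D B)] [Algebra D (DBFlat D B)] [Lattice (DBFlat D B)]
    (hle : ∀ f g : DBFlat D B, f ≤ g ↔ ∀ a : D, f.1 a ≤ g.1 a)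
    (hzero : ((0 : DBFlat D B)).1 = fun a : D => if a ≤ 0 then (⊤ : B) else ⊥)
    (hone : ((1 : DBFlat D B)).1 = fun a : D => if a ≤ 1 then (⊤ : B) else ⊥)
    (hadd : ∀ f g : DBFlat D B, ∀ a : D,
      IsLUB {x : B | ∃ b₁ b₂ : D, a ≤ b₁ + b₂ ∧ x = f.1 b₁ ⊓ g.1 b₂} ((f + g).1 a))
    (hsmul : ∀ b : D, 0 < b → ∀ (f : DBFlat D B) (a : D),
      IsLUB {x : B | ∃ c : D, a ≤ b * c ∧ x = f.1 c} ((b • f).1 a))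
    (hmul : ∀ f g : DBFlat D B, 0 ≤ f → 0 ≤ g → ∀ a : D,
      IsLUB {x : B | ∃ b₁ b₂ : D, 0 ≤ b₁ ∧ 0 ≤ b₂ ∧ a ≤ b₁ * b₂ ∧ x = f.1 b₁ ⊓ g.1 b₂}
        ((f * g).1 a)) :
    IsProximity D (DBFlat D B) (fun f g => ∀ b : D, p (f.1 b) (g.1 b)) ∧
    (∀ (e f : B) (x y : DBFlat D B),
      (x.1 = fun a : D => if a ≤ 0 then ⊤ else if a ≤ 1 then e else ⊥) →
      (y.1 = fun a : D => if a ≤ 0 then ⊤ else if a ≤ 1 then f else ⊥) →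
      (p e f ↔ ∀ b : D, p (x.1 b) (y.1 b))) ∧
    (∀ q : DBFlat D B → DBFlat D B → Prop, IsProximity D (DBFlat D B) q →
      (∀ x y : DBFlat D B, IsIdempotentElem x → IsIdempotentElem y →
        (q x y ↔ ∀ b : D, p (x.1 b) (y.1 b))) →
      q = fun f g => ∀ b : D, p (f.1 b) (g.1 b)) := by
  classical
  refine ⟨St16.part1 hp hle hzero hone hadd hsmul hmul, ?_, ?_⟩
  · -- the canonical idempotents transport `p`
    intro e f x y hx hy
    constructor
    · intro hef b
      rw [hx, hy]
      dsimp only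
      split_ifs
      · exact hp.1.2
      · exact hef
      · exact hp.1.1
    · intro h
      have h1 := h 1
      have hc1 : ¬ (1:D) ≤ 0 := not_le.mpr one_pos
      rw [hx, hy] at h1
      dsimp only at h1
      rw [if_neg hc1, if_neg hc1, if_pos le_rfl, if_pos le_rfl] at h1
      exact h1
  · -- uniqueness
    intro q hq hiff
    funext f g
    refine propext ⟨fun h b => St16.qsubr hle hzero hone hadd hsmul hmul hq hiff f g h b,
      fun h => St16.rsubq hp hle hzero hone hadd hsmul hmul hq hiff f g h⟩
end

section
/- Let A be an f-ring and e ∈ A. Then e is idempotent (e² = e) if and only if e = (2e) ∧ 1. -/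
open Finset

/-- in an f-ring, `e` is idempotent iff `e = 2e ∧ 1`. -/
theorem statement17 (A : Type*) [Ring A] [Lattice A]
    (hadd : ∀ r s t : A, s ≤ t → s + r ≤ t + r)
    (hmulpos : ∀ s t : A, 0 ≤ s → 0 ≤ t → 0 ≤ s * t)
    (hf : ∀ r s t : A, s ⊓ t = 0 → 0 ≤ r → (r * s) ⊓ t = 0)
    (e : A) :
    IsIdempotentElem e ↔ e = (2 * e) ⊓ 1 := by
  haveI iR : AddRightMono A := ⟨fun a b c h => hadd a b c h⟩
  haveI iL : AddLeftMono A := ⟨fun a b c h => by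
    simpa only [add_comm a] using hadd a b c h⟩
  -- subadditivity of meet on nonnegative elements
  have hsub : ∀ x y z : A, 0 ≤ x → 0 ≤ y → 0 ≤ z →
      (x + y) ⊓ z ≤ x ⊓ z + y ⊓ z := by
    intro x y z hx hy hz
    have h1 : (x + y) ⊓ z ≤ x ⊓ z + y := by
      have h1a : (x + y) ⊓ z ≤ (x + y) ⊓ (z + y) :=
        inf_le_inf_left _ (le_add_of_nonneg_right hy)
      have h1b : (x + y) ⊓ (z + y) = x ⊓ z + y := (inf_add x z y).symm
      exact h1a.trans_eq h1b
    have h2 : (x + y) ⊓ z ≤ x ⊓ z + z :=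
      le_trans inf_le_right (le_add_of_nonneg_left (le_inf hx hz))
    have h3 : (x ⊓ z + y) ⊓ (x ⊓ z + z) = x ⊓ z + y ⊓ z := (add_inf _ _ _).symm
    exact (le_inf h1 h2).trans_eq h3
  have hsub3 : ∀ x y z t : A, 0 ≤ x → 0 ≤ y → 0 ≤ z → 0 ≤ t →
      (x + (y + z)) ⊓ t ≤ x ⊓ t + ((y ⊓ t) + (z ⊓ t)) := by
    intro x y z t hx hy hz ht
    have h1 : (x + (y + z)) ⊓ t ≤ x ⊓ t + (y + z) ⊓ t :=
      hsub x (y + z) t hx (add_nonneg hy hz) ht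
    have h2 : (y + z) ⊓ t ≤ y ⊓ t + z ⊓ t := hsub y z t hy hz ht
    exact h1.trans (add_le_add_right h2 _)
  -- 0 ≤ 1
  have hone : (0 : A) ≤ 1 := by
    have hq : (0 : A) ≤ (1 : A)⁺ := posPart_nonneg 1
    have hm : (0 : A) ≤ (1 : A)⁻ := negPart_nonneg 1
    have hqm : (1 : A)⁺ ⊓ (1 : A)⁻ = 0 := posPart_inf_negPart_eq_zero 1
    have hqm' : ((1 : A)⁻ * (1 : A)⁺) ⊓ (1 : A)⁻ = 0 := hf _ _ _ hqm hm
    have hsub1 : (1 : A)⁺ - (1 : A)⁻ = 1 := posPart_sub_negPart 1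
    have hexp : (1 : A)⁻ * (1 : A)⁺ = (1 : A)⁻ + (1 : A)⁻ * (1 : A)⁻ := by
      have h0 : (1 : A)⁻ * ((1 : A)⁺ - (1 : A)⁻) = (1 : A)⁻ := by
        rw [hsub1, mul_one]
      rw [mul_sub] at h0
      exact sub_eq_iff_eq_add.mp h0
    have hle : (1 : A)⁻ ≤ (1 : A)⁻ * (1 : A)⁺ := by
      rw [hexp]; exact le_add_of_nonneg_right (hmulpos _ _ hm hm)
    have hm0 : (1 : A)⁻ = 0 := by
      have h5 : ((1 : A)⁻ * (1 : A)⁺) ⊓ (1 : A)⁻ = (1 : A)⁻ := inf_eq_right.mpr hle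
      rw [hqm'] at h5; exact h5.symm
    have := posPart_sub_negPart (1 : A)
    rw [hm0, sub_zero] at this
    rw [← this]; exact hq
  -- key multiplicative lemma: u ∈ [0,1], u ⊓ x = 0 ⟹ x * u = 0
  have huni : ∀ u x : A, 0 ≤ u → u ≤ 1 → 0 ≤ x → u ⊓ x = 0 → x * u = 0 := by
    intro u x hu hu1 hx hux
    have h1 : x * u ≤ x := by
      have h0 : 0 ≤ x * (1 - u) := hmulpos _ _ hx (sub_nonneg.mpr hu1)
      rw [mul_sub, mul_one] at h0
      exact sub_nonneg.mp h0
    have h2 : (x * u) ⊓ x = 0 := hf x u x hux hx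
    have h3 : (x * u) ⊓ x = x * u := inf_eq_left.mpr h1
    rw [h3] at h2; exact h2
  -- THE KEY: idempotents are nonnegative
  have hkey : ∀ e : A, e * e = e → 0 ≤ e := by
    intro e hE
    have hp : 0 ≤ e⁺ := posPart_nonneg e
    have hn : 0 ≤ e⁻ := negPart_nonneg e
    have hpn : e⁺ ⊓ e⁻ = 0 := posPart_inf_negPart_eq_zero e
    have hsubPN : e⁺ - e⁻ = e := posPart_sub_negPart e
    set p := e⁺ with hp_def
    set n := e⁻ with hn_def
    have hnp : n ⊓ p = 0 := by rw [inf_comm]; exact hpn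
    have hPN : 0 ≤ p * n := hmulpos _ _ hp hn
    have hNP : 0 ≤ n * p := hmulpos _ _ hn hp
    have hPP : 0 ≤ p * p := hmulpos _ _ hp hp
    have hNN : 0 ≤ n * n := hmulpos _ _ hn hn
    have F1 : (p * n) ⊓ p = 0 := hf p n p hnp hp
    have F2 : (n * p) ⊓ n = 0 := hf n p n hpn hn
    have F3 : (n * n) ⊓ p = 0 := hf n n p hnp hn
    have F4 : (p * p) ⊓ n = 0 := hf p p n hpn hp
    have F5 : (p * p) ⊓ (p * n) = 0 := by
      refine hf p p (p * n) ?_ hp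
      rw [inf_comm]; exact F1
    have F6 : (n * n) ⊓ (n * p) = 0 := by
      refine hf n n (n * p) ?_ hn
      rw [inf_comm]; exact F2
    -- main equation: p² + (n² + n) = p + (pn + np)
    have h2 : (p * p - p * n) - (n * p - n * n) = p - n := by
      rw [← mul_sub, ← mul_sub, ← sub_mul, hsubPN]; exact hE
    have heq : p * p + (n * n + n) = p + (p * n + n * p) := by
      have h3 : ((p * p - p * n) - (n * p - n * n)) - (p - n) = 0 :=
        sub_eq_zero.mpr h2
      have h4 : (p * p + (n * n + n)) - (p + (p * n + n * p))
          = ((p * p - p * n) - (n * p - n * n)) - (p - n) := by abel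
      rw [h3] at h4
      exact sub_eq_zero.mp h4
    -- M1 : n ≤ p * n
    have M1 : n ≤ p * n := by
      have hnL : n ≤ p * p + (n * n + n) :=
        (le_add_of_nonneg_left hNN).trans (le_add_of_nonneg_left hPP)
      have h5 : (p + (p * n + n * p)) ⊓ n = n := by
        rw [← heq]; exact inf_eq_right.mpr hnL
      have h6 : (p + (p * n + n * p)) ⊓ n ≤ p ⊓ n + ((p * n) ⊓ n + (n * p) ⊓ n) :=
        hsub3 p (p * n) (n * p) n hp hPN hNP hn
      rw [hpn, F2, zero_add, add_zero] at h6
      rw [h5] at h6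
      exact h6.trans inf_le_left
    -- M2 : p ≤ p * p
    have M2 : p ≤ p * p := by
      have hpR : p ≤ p + (p * n + n * p) :=
        le_add_of_nonneg_right (add_nonneg hPN hNP)
      have h5 : (p * p + (n * n + n)) ⊓ p = p := by
        rw [heq]; exact inf_eq_right.mpr hpR
      have h6 : (p * p + (n * n + n)) ⊓ p ≤ (p * p) ⊓ p + ((n * n) ⊓ p + n ⊓ p) :=
        hsub3 (p * p) (n * n) n p hPP hNN hn hp
      rw [F3, hnp, add_zero, add_zero] at h6
      rw [h5] at h6
      exact h6.trans inf_le_left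
    -- M3 : n * n ≤ p * n
    have M3 : n * n ≤ p * n := by
      have hL : n * n ≤ p * p + (n * n + n) :=
        (le_add_of_nonneg_right hn).trans (le_add_of_nonneg_left hPP)
      have h5 : (p + (p * n + n * p)) ⊓ (n * n) = n * n := by
        rw [← heq]; exact inf_eq_right.mpr hL
      have h6 : (p + (p * n + n * p)) ⊓ (n * n)
          ≤ p ⊓ (n * n) + ((p * n) ⊓ (n * n) + (n * p) ⊓ (n * n)) :=
        hsub3 p (p * n) (n * p) (n * n) hp hPN hNP hNN
      have e1 : p ⊓ (n * n) = 0 := by rw [inf_comm]; exact F3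
      have e2 : (n * p) ⊓ (n * n) = 0 := by rw [inf_comm]; exact F6
      rw [e1, e2, zero_add, add_zero] at h6
      rw [h5] at h6
      exact h6.trans inf_le_left
    -- M4 : p * n ≤ n * n + n
    have M4 : p * n ≤ n * n + n := by
      have hR' : p + (p * n + n * p) = p * n + (p + n * p) := by abel
      have hL : p * n ≤ p + (p * n + n * p) := by
        rw [hR']; exact le_add_of_nonneg_right (add_nonneg hp hNP)
      have h5 : (p * p + (n * n + n)) ⊓ (p * n) = p * n := by
        rw [heq]; exact inf_eq_right.mpr hL
      have h6 : (p * p + (n * n + n)) ⊓ (p * n)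
          ≤ (p * p) ⊓ (p * n) + ((n * n) ⊓ (p * n) + n ⊓ (p * n)) :=
        hsub3 (p * p) (n * n) n (p * n) hPP hNN hn hPN
      rw [F5, zero_add] at h6
      rw [h5] at h6
      exact h6.trans (add_le_add inf_le_left inf_le_left)
    -- M5 : n + n * n ≤ p * n  hence equality A
    have hu : 0 ≤ p * n - n := sub_nonneg.mpr M1
    have hppp : 0 ≤ p * p - p := sub_nonneg.mpr M2
    have heq2 : (p * p - p) + n * n = (p * n - n) + n * p := by
      have h4 : (((p * p - p) + n * n) - ((p * n - n) + n * p))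
          = (p * p + (n * n + n)) - (p + (p * n + n * p)) := by abel
      rw [sub_eq_zero.mpr heq] at h4
      exact sub_eq_zero.mp h4
    have M5 : n * n ≤ p * n - n := by
      have hL : n * n ≤ (p * p - p) + n * n := le_add_of_nonneg_left hppp
      have h5 : ((p * n - n) + n * p) ⊓ (n * n) = n * n := by
        rw [← heq2]; exact inf_eq_right.mpr hL
      have h6 : ((p * n - n) + n * p) ⊓ (n * n)
          ≤ (p * n - n) ⊓ (n * n) + (n * p) ⊓ (n * n) :=
        hsub (p * n - n) (n * p) (n * n) hu hNP hNN
      have e2 : (n * p) ⊓ (n * n) = 0 := by rw [inf_comm]; exact F6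
      rw [e2, add_zero] at h6
      rw [h5] at h6
      exact h6.trans inf_le_left
    have hA : p * n = n + n * n := by
      refine le_antisymm ?_ ?_
      · rw [add_comm]; exact M4
      · have := le_sub_iff_add_le'.mp M5
        exact this
    -- w := n ⊓ 1
    set w := n ⊓ 1 with hw_def
    have hw0 : 0 ≤ w := le_inf hn hone
    have hw1 : w ≤ 1 := inf_le_right
    have hwn : w ≤ n := inf_le_left
    have hwp : w ⊓ p = 0 :=
      le_antisymm ((inf_le_inf_right p hwn).trans_eq hnp) (le_inf hw0 hp)
    have hpw : p * w = 0 := huni w p hw0 hw1 hp hwp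
    -- n ⊓ (1 - w) = 0
    have hs1t1 : (n - w) ⊓ (1 - w) = 0 := by
      have e1 : (n ⊓ 1) + -w = (n + -w) ⊓ (1 + -w) := inf_add n 1 (-w)
      rw [← hw_def] at e1
      simp only [← sub_eq_add_neg] at e1
      rw [sub_self] at e1
      exact e1.symm
    have hps1 : p * (n - w) = p * n := by rw [mul_sub, hpw, sub_zero]
    have hpnt1 : (p * n) ⊓ (1 - w) = 0 := by
      have := hf p (n - w) (1 - w) hs1t1 hp
      rwa [hps1] at this
    have hnt1 : n ⊓ (1 - w) = 0 :=
      le_antisymm ((inf_le_inf_right _ M1).trans_eq hpnt1)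
        (le_inf hn (sub_nonneg.mpr hw1))
    -- n * w = n
    have hnt1' : (1 - w) ⊓ n = 0 := by rw [inf_comm]; exact hnt1
    have hG : (n * (1 - w)) ⊓ n = 0 := hf n (1 - w) n hnt1' hn
    have hsplitn : n * w + n * (1 - w) = n := by
      rw [← mul_add, add_sub_cancel, mul_one]
    have hnw0 : 0 ≤ n * w := hmulpos _ _ hn hw0
    have hnt0 : 0 ≤ n * (1 - w) := hmulpos _ _ hn (sub_nonneg.mpr hw1)
    have hnlenw : n ≤ n * w := by
      have h8 : (n * w + n * (1 - w)) ⊓ n = n := by rw [hsplitn, inf_idem]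
      have h9 : (n * w + n * (1 - w)) ⊓ n ≤ (n * w) ⊓ n + (n * (1 - w)) ⊓ n :=
        hsub _ _ _ hnw0 hnt0 hn
      rw [hG, add_zero, h8] at h9
      exact h9.trans inf_le_left
    have hnwlen : n * w ≤ n := by
      have h0 := hmulpos n (1 - w) hn (sub_nonneg.mpr hw1)
      rw [mul_sub, mul_one] at h0
      exact sub_nonneg.mp h0
    have hnw : n * w = n := le_antisymm hnwlen hnlenw
    -- d := n - w * n
    have hwnlen : w * n ≤ n := by
      have h0 := hmulpos (1 - w) n (sub_nonneg.mpr hw1) hn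
      rw [sub_mul, one_mul] at h0
      exact sub_nonneg.mp h0
    set d := n - w * n with hd_def
    have hd0 : 0 ≤ d := sub_nonneg.mpr hwnlen
    have hwn0 : 0 ≤ w * n := hmulpos _ _ hw0 hn
    have hdn : d ≤ n := sub_le_self _ hwn0
    have hnd : n * d = 0 := by
      rw [hd_def, mul_sub, ← mul_assoc, hnw, sub_self]
    have hpd : p * d = p * n := by
      rw [hd_def, mul_sub, ← mul_assoc, hpw, zero_mul, sub_zero]
    have hdp : d ⊓ p = 0 :=
      le_antisymm ((inf_le_inf_right p hdn).trans_eq hnp) (le_inf hd0 hp)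
    -- θ := d ⊓ 1
    set θ := d ⊓ 1 with hθ_def
    have hθ0 : 0 ≤ θ := le_inf hd0 hone
    have hθ1 : θ ≤ 1 := inf_le_right
    have hθd : θ ≤ d := inf_le_left
    have hθp : θ ⊓ p = 0 :=
      le_antisymm ((inf_le_inf_right p hθd).trans_eq hdp) (le_inf hθ0 hp)
    have hpθ : p * θ = 0 := huni θ p hθ0 hθ1 hp hθp
    have hs2t2 : (d - θ) ⊓ (1 - θ) = 0 := by
      have e1 : (d ⊓ 1) + -θ = (d + -θ) ⊓ (1 + -θ) := inf_add d 1 (-θ)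
      rw [← hθ_def] at e1
      simp only [← sub_eq_add_neg] at e1
      rw [sub_self] at e1
      exact e1.symm
    have hps2 : p * (d - θ) = p * n := by rw [mul_sub, hpθ, sub_zero, hpd]
    have hpnt2 : (p * n) ⊓ (1 - θ) = 0 := by
      have := hf p (d - θ) (1 - θ) hs2t2 hp
      rwa [hps2] at this
    have hdlepn : d ≤ p * n := hdn.trans M1
    have hdt2 : d ⊓ (1 - θ) = 0 :=
      le_antisymm ((inf_le_inf_right _ hdlepn).trans_eq hpnt2)
        (le_inf hd0 (sub_nonneg.mpr hθ1))
    have hdt2' : (1 - θ) ⊓ d = 0 := by rw [inf_comm]; exact hdt2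
    have hH : (d * (1 - θ)) ⊓ d = 0 := hf d (1 - θ) d hdt2' hd0
    have hsplitd : d * θ + d * (1 - θ) = d := by
      rw [← mul_add, add_sub_cancel, mul_one]
    have hdθ0 : 0 ≤ d * θ := hmulpos _ _ hd0 hθ0
    have hdt20 : 0 ≤ d * (1 - θ) := hmulpos _ _ hd0 (sub_nonneg.mpr hθ1)
    have hdledθ : d ≤ d * θ := by
      have h8 : (d * θ + d * (1 - θ)) ⊓ d = d := by rw [hsplitd, inf_idem]
      have h9 : (d * θ + d * (1 - θ)) ⊓ d ≤ (d * θ) ⊓ d + (d * (1 - θ)) ⊓ d :=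
        hsub _ _ _ hdθ0 hdt20 hd0
      rw [hH, add_zero, h8] at h9
      exact h9.trans inf_le_left
    have hdθled : d * θ ≤ d := by
      have h0 := hmulpos d (1 - θ) hd0 (sub_nonneg.mpr hθ1)
      rw [mul_sub, mul_one] at h0
      exact sub_nonneg.mp h0
    have hdθ : d * θ = d := le_antisymm hdθled hdledθ
    -- θ * θ = 0
    have hnθ : n * θ = 0 := by
      refine le_antisymm ?_ (hmulpos _ _ hn hθ0)
      have h10 := hmulpos n (d - θ) hn (sub_nonneg.mpr hθd)
      rw [mul_sub] at h10
      have h11 : n * θ ≤ n * d := sub_nonneg.mp h10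
      rwa [hnd] at h11
    have hθn : θ ≤ n := hθd.trans hdn
    have hθθ : θ * θ = 0 := by
      refine le_antisymm ?_ (hmulpos _ _ hθ0 hθ0)
      have h10 := hmulpos (n - θ) θ (sub_nonneg.mpr hθn) hθ0
      rw [sub_mul] at h10
      have h11 : θ * θ ≤ n * θ := sub_nonneg.mp h10
      rwa [hnθ] at h11
    -- d = 0
    have hdzero : d = 0 := by
      have h12 : d = d * (θ * θ) := by
        rw [← mul_assoc, hdθ, hdθ]
      rw [hθθ, mul_zero] at h12
      exact h12
    have hwnn : w * n = n := by
      rw [hd_def] at hdzero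
      exact (sub_eq_zero.mp hdzero).symm
    have hpn0 : p * n = 0 := by
      rw [← hwnn, ← mul_assoc, hpw, zero_mul]
    have hn0 : n = 0 := by
      have h12 : n + n * n = 0 := by rw [← hA, hpn0]
      have h13 : n ≤ n + n * n := le_add_of_nonneg_right hNN
      rw [h12] at h13
      exact le_antisymm h13 hn
    have := hsubPN
    rw [hn0, sub_zero] at this
    rw [← this]
    exact hp
  constructor
  · -- forward: idempotent → e = 2e ⊓ 1
    intro hE
    have hE' : e * e = e := hE
    have hF : (1 - e) * (1 - e) = 1 - e := by
      simp only [mul_sub, sub_mul, one_mul, mul_one, hE']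
      abel
    have he0 : 0 ≤ e := hkey e hE'
    have hf0 : 0 ≤ 1 - e := hkey (1 - e) hF
    set m := e ⊓ (1 - e) with hm_def
    have hm0 : 0 ≤ m := le_inf he0 hf0
    have hme : m ≤ e := inf_le_left
    have hmf : m ≤ 1 - e := inf_le_right
    have hef : e * (1 - e) = 0 := by rw [mul_sub, mul_one, hE', sub_self]
    -- m*m ≤ 0
    have hmm1 : m * m ≤ m * (1 - e) := by
      have h0 := hmulpos m ((1 - e) - m) hm0 (sub_nonneg.mpr hmf)
      rw [mul_sub] at h0
      exact sub_nonneg.mp h0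
    have hmm2 : m * (1 - e) ≤ e * (1 - e) := by
      have h0 := hmulpos (e - m) (1 - e) (sub_nonneg.mpr hme) hf0
      rw [sub_mul] at h0
      exact sub_nonneg.mp h0
    have hmmle : m * m ≤ 0 := by
      have := hmm1.trans hmm2
      rwa [hef] at this
    -- m + m ≤ m*m + m*m via the ab+ba identity
    have hfe : (1 - e) * e = 0 := by rw [sub_mul, one_mul, hE', sub_self]
    have hSpos : 0 ≤ (e - m) * ((1 - e) - m) + ((1 - e) - m) * (e - m) :=
      add_nonneg (hmulpos _ _ (sub_nonneg.mpr hme) (sub_nonneg.mpr hmf))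
        (hmulpos _ _ (sub_nonneg.mpr hmf) (sub_nonneg.mpr hme))
    have hSid : (e - m) * ((1 - e) - m) + ((1 - e) - m) * (e - m)
        = (m * m + m * m) - (m + m) := by
      simp only [mul_sub, sub_mul, mul_one, one_mul, hE']
      abel
    have hmle : m + m ≤ 0 := by
      rw [hSid] at hSpos
      have h0 : m + m ≤ m * m + m * m := sub_nonneg.mp hSpos
      have h1 : m * m + m * m ≤ 0 := by
        have := add_le_add hmmle hmmle
        rwa [add_zero] at this
      exact h0.trans h1
    have hmzero : m = 0 := by
      have h0 : m ≤ m + m := le_add_of_nonneg_left hm0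
      exact le_antisymm (h0.trans hmle) hm0
    -- conclude
    have hfin : (2 * e) ⊓ 1 = e := by
      have h1 : (2 : A) * e = e + e := by rw [two_mul]
      have h2 : (1 : A) = e + (1 - e) := by abel
      rw [h1]
      calc (e + e) ⊓ 1 = (e + e) ⊓ (e + (1 - e)) := by rw [← h2]
        _ = e + (e ⊓ (1 - e)) := (add_inf _ _ _).symm
        _ = e + 0 := by rw [← hm_def, hmzero]
        _ = e := add_zero e
    exact hfin.symm
  · -- backward
    intro h
    have he2 : e ≤ 2 * e := h.le.trans inf_le_left
    have he1 : e ≤ 1 := h.le.trans inf_le_right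
    have he0 : 0 ≤ e := by
      have h1 : e + 0 ≤ e + e := by
        rw [add_zero]; rw [two_mul] at he2; exact he2
      exact le_of_add_le_add_left h1
    have hmeet : e ⊓ (1 - e) = 0 := by
      have h1 : (2 : A) * e = e + e := by rw [two_mul]
      have h2 : (1 : A) = e + (1 - e) := by abel
      have h3 : e + 0 = e + (e ⊓ (1 - e)) := by
        rw [add_zero]
        calc e = (2 * e) ⊓ 1 := h
          _ = (e + e) ⊓ (e + (1 - e)) := by rw [← h1, ← h2]
          _ = e + (e ⊓ (1 - e)) := (add_inf _ _ _).symm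
      exact (add_left_cancel h3).symm
    have hmeet' : (1 - e) ⊓ e = 0 := by rw [inf_comm]; exact hmeet
    have hx0 : 0 ≤ e * (1 - e) := hmulpos _ _ he0 (sub_nonneg.mpr he1)
    have hxe : (e * (1 - e)) ⊓ e = 0 := hf e (1 - e) e hmeet' he0
    have hxle : e * (1 - e) ≤ e := by
      rw [mul_sub, mul_one]
      exact sub_le_self _ (hmulpos _ _ he0 he0)
    have hx : e * (1 - e) = 0 := by
      have h3 : (e * (1 - e)) ⊓ e = e * (1 - e) := inf_eq_left.mpr hxle
      rw [h3] at hxe; exact hxe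
    have : e - e * e = 0 := by
      rw [mul_sub, mul_one] at hx; exact hx
    exact (sub_eq_zero.mp this).symm
end

section
/- Let D be a totally ordered integral domain and let α : S → T be a proximity morphism between proximity Baer-Specker D-algebras (S, ◁) and (T, ◁). Then α maps idempotents to idempotents, and the restriction α|_{Id(S)} : Id(S) → Id(T) is a de Vries morphism. -/
open Finset

section SpeckerLemmas

variable {D R : Type*} [CommRing D] [LinearOrder D] [IsStrictOrderedRing D] [CommRing R] [Algebra D R]

lemma sum_orth_idem {ι : Type*} (s : Finset ι) (e : ι → R)
    (he : ∀ i, IsIdempotentElem (e i)) (ho : ∀ i j, i ≠ j → e i * e j = 0) :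
    IsIdempotentElem (∑ i ∈ s, e i) := by
  unfold IsIdempotentElem
  rw [Finset.sum_mul_sum]
  refine Finset.sum_congr rfl fun i hi => ?_
  rw [Finset.sum_eq_single_of_mem i hi (fun j _ hj => ho i j (Ne.symm hj)), he i]

lemma sum_mul_sum_orth {n : ℕ} (a b : Fin n → D) (e : Fin n → R)
    (he : ∀ i, IsIdempotentElem (e i)) (ho : ∀ i j, i ≠ j → e i * e j = 0) :
    (∑ i, a i • e i) * (∑ i, b i • e i) = ∑ i, (a i * b i) • e i := by
  rw [Finset.sum_mul_sum]
  refine Finset.sum_congr rfl fun i _ => ?_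
  rw [Finset.sum_eq_single_of_mem i (Finset.mem_univ i) (fun j _ hj => ?_)]
  · rw [smul_mul_smul_comm, he i]
  · rw [smul_mul_smul_comm, ho i j (Ne.symm hj), smul_zero]

lemma comp_mul {n : ℕ} (a : Fin n → D) (e : Fin n → R)
    (he : ∀ i, IsIdempotentElem (e i)) (ho : ∀ i j, i ≠ j → e i * e j = 0) (k : Fin n) :
    (∑ i, a i • e i) * e k = a k • e k := by
  rw [Finset.sum_mul]
  rw [Finset.sum_eq_single_of_mem k (Finset.mem_univ k) (fun j _ hj => ?_)]
  · rw [smul_mul_assoc, he k]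
  · rw [smul_mul_assoc, ho j k hj, smul_zero]

/-- Common refinement of two partitions of unity with coefficient provenance. -/
lemma common_refine {n m : ℕ} (a : Fin n → D) (b : Fin m → D) (e : Fin n → R) (f : Fin m → R)
    (he : ∀ i, IsIdempotentElem (e i)) (hf : ∀ j, IsIdempotentElem (f j))
    (hoe : ∀ i j, i ≠ j → e i * e j = 0) (hof : ∀ i j, i ≠ j → f i * f j = 0)
    (h1e : ∑ i, e i = 1) (h1f : ∑ j, f j = 1) :
    ∃ (k : ℕ) (a' b' : Fin k → D) (e' : Fin k → R),
      (∀ i, IsIdempotentElem (e' i)) ∧ (∀ i j, i ≠ j → e' i * e' j = 0) ∧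
      (∑ i, e' i = 1) ∧ (∑ i, a' i • e' i = ∑ i, a i • e i) ∧
      (∑ i, b' i • e' i = ∑ j, b j • f j) ∧
      (∀ i, ∃ j, a' i = a j) ∧ (∀ i, ∃ j, b' i = b j) := by
  classical
  let q : Fin (n * m) ≃ Fin n × Fin m := finProdFinEquiv.symm
  refine ⟨n * m, fun k => a (q k).1, fun k => b (q k).2, fun k => e (q k).1 * f (q k).2,
    ?_, ?_, ?_, ?_, ?_, fun i => ⟨(q i).1, rfl⟩, fun i => ⟨(q i).2, rfl⟩⟩
  · intro k
    show (e (q k).1 * f (q k).2) * (e (q k).1 * f (q k).2) = _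
    rw [mul_mul_mul_comm, he (q k).1, hf (q k).2]
  · intro k l hkl
    have hq : q k ≠ q l := fun h => hkl (q.injective h)
    rw [mul_mul_mul_comm]
    by_cases h1 : (q k).1 = (q l).1
    · have h2 : (q k).2 ≠ (q l).2 := fun h2 => hq (Prod.ext h1 h2)
      rw [hof _ _ h2, mul_zero]
    · rw [hoe _ _ h1, zero_mul]
  · rw [Fintype.sum_equiv q _ (fun p : Fin n × Fin m => e p.1 * f p.2) (fun k => rfl),
      Fintype.sum_prod_type, ← Finset.sum_mul_sum, h1e, h1f, one_mul]
  · rw [Fintype.sum_equiv q _ (fun p : Fin n × Fin m => a p.1 • (e p.1 * f p.2)) (fun k => rfl),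
      Fintype.sum_prod_type]
    refine Finset.sum_congr rfl fun i _ => ?_
    have h2 : a i • (e i * ∑ y, f y) = ∑ y : Fin m, a i • (e i * f y) := by
      rw [Finset.mul_sum, Finset.smul_sum]
    rw [h1f, mul_one] at h2
    rw [← h2]
  · rw [Fintype.sum_equiv q _ (fun p : Fin n × Fin m => b p.2 • (e p.1 * f p.2)) (fun k => rfl),
      Fintype.sum_prod_type, Finset.sum_comm]
    refine Finset.sum_congr rfl fun j _ => ?_
    have h2 : b j • ((∑ y, e y) * f j) = ∑ y : Fin n, b j • (e y * f j) := by
      rw [Finset.sum_mul, Finset.smul_sum]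
    rw [h1e, one_mul] at h2
    rw [← h2]

/-- Every element decomposes along a partition of unity into orthogonal idempotents. -/
def PartDecomp (D R : Type*) [CommRing D] [LinearOrder D] [IsStrictOrderedRing D] [CommRing R] [Algebra D R]
    (x : R) : Prop :=
  ∃ (n : ℕ) (a : Fin n → D) (e : Fin n → R),
    (∀ i, IsIdempotentElem (e i)) ∧ (∀ i j, i ≠ j → e i * e j = 0) ∧
    (∑ i, e i = 1) ∧ x = ∑ i, a i • e i

lemma partDecomp_idem {e : R} (he : IsIdempotentElem e) : PartDecomp D R e := by
  refine ⟨2, ![1, 0], ![e, 1 - e], ?_, ?_, ?_, ?_⟩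
  · intro i
    fin_cases i
    · exact he
    · exact he.one_sub
  · intro i j hij
    have h1 : e * (1 - e) = 0 := by rw [mul_sub, mul_one, he.eq, sub_self]
    have h2 : (1 - e) * e = 0 := by rw [sub_mul, one_mul, he.eq, sub_self]
    fin_cases i <;> fin_cases j <;> simp_all
  · rw [Fin.sum_univ_two]; simp
  · rw [Fin.sum_univ_two]; simp

lemma partDecomp_algebraMap (r : D) : PartDecomp D R (algebraMap D R r) := by
  refine ⟨1, fun _ => r, fun _ => 1, fun _ => IsIdempotentElem.one, ?_, ?_, ?_⟩
  · intro i j hij; exact absurd (Subsingleton.elim i j) hij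
  · simp
  · simp [Algebra.algebraMap_eq_smul_one]

lemma partDecomp_add {x y : R} (hx : PartDecomp D R x) (hy : PartDecomp D R y) :
    PartDecomp D R (x + y) := by
  obtain ⟨n, a, e, he, hoe, h1e, rfl⟩ := hx
  obtain ⟨m, b, f, hf, hof, h1f, rfl⟩ := hy
  obtain ⟨k, a', b', e', he', ho', h1', hae, hbe, -, -⟩ :=
    common_refine a b e f he hf hoe hof h1e h1f
  refine ⟨k, fun i => a' i + b' i, e', he', ho', h1', ?_⟩
  rw [← hae, ← hbe, ← Finset.sum_add_distrib]
  exact Finset.sum_congr rfl fun i _ => (add_smul _ _ _).symm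

lemma partDecomp_mul {x y : R} (hx : PartDecomp D R x) (hy : PartDecomp D R y) :
    PartDecomp D R (x * y) := by
  obtain ⟨n, a, e, he, hoe, h1e, rfl⟩ := hx
  obtain ⟨m, b, f, hf, hof, h1f, rfl⟩ := hy
  obtain ⟨k, a', b', e', he', ho', h1', hae, hbe, -, -⟩ :=
    common_refine a b e f he hf hoe hof h1e h1f
  exact ⟨k, fun i => a' i * b' i, e', he', ho', h1', by
    rw [← hae, ← hbe, sum_mul_sum_orth a' b' e' he' ho']⟩

lemma specker_partDecomp (hsp : IsSpecker D R) (x : R) : PartDecomp D R x := by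
  have hx : x ∈ Algebra.adjoin D {e : R | IsIdempotentElem e} := by
    rw [hsp.2]; exact Algebra.mem_top
  exact Algebra.adjoin_induction (fun e he => partDecomp_idem he)
    (fun r => partDecomp_algebraMap r)
    (fun y z _ _ hy hz => partDecomp_add hy hz)
    (fun y z _ _ hy hz => partDecomp_mul hy hz) hx

section OrderPart
variable [Lattice R]

lemma nonneg_iff' (hle : ∀ s t : R, s ≤ t ↔ OrthNonnegDecomp D R (t - s)) (x : R) :
    0 ≤ x ↔ OrthNonnegDecomp D R x := by rw [hle, sub_zero]

lemma le_iff_sub' (hle : ∀ s t : R, s ≤ t ↔ OrthNonnegDecomp D R (t - s)) (x y : R) :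
    x ≤ y ↔ 0 ≤ y - x := by rw [hle, nonneg_iff' hle]

lemma ond_fin (hle : ∀ s t : R, s ≤ t ↔ OrthNonnegDecomp D R (t - s))
    {ι : Type*} [Fintype ι] (a : ι → D) (e : ι → R)
    (ha : ∀ i, 0 ≤ a i) (he : ∀ i, IsIdempotentElem (e i))
    (ho : ∀ i j, i ≠ j → e i * e j = 0) : (0:R) ≤ ∑ i, a i • e i := by
  rw [nonneg_iff' hle _]
  let q : Fin (Fintype.card ι) ≃ ι := (Fintype.equivFin ι).symm
  refine ⟨_, a ∘ q, e ∘ q, fun i => ha _, fun i => he _,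
    fun i j hij => ho _ _ (fun h => hij (q.injective h)), ?_⟩
  exact (Fintype.sum_equiv q (fun k => a (q k) • e (q k)) _ (fun k => rfl)).symm

lemma idem_nonneg (hle : ∀ s t : R, s ≤ t ↔ OrthNonnegDecomp D R (t - s))
    {e : R} (he : IsIdempotentElem e) : 0 ≤ e := by
  rw [nonneg_iff' hle _]
  exact ⟨1, fun _ => 1, fun _ => e, fun _ => zero_le_one, fun _ => he,
    fun i j hij => absurd (Subsingleton.elim i j) hij, by simp⟩

lemma idem_le_one (hle : ∀ s t : R, s ≤ t ↔ OrthNonnegDecomp D R (t - s))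
    {e : R} (he : IsIdempotentElem e) : e ≤ 1 := by
  rw [le_iff_sub' hle]
  exact idem_nonneg hle he.one_sub

lemma smul_nonneg'' (hle : ∀ s t : R, s ≤ t ↔ OrthNonnegDecomp D R (t - s))
    {c : D} {x : R} (hc : 0 ≤ c) (hx : 0 ≤ x) : 0 ≤ c • x := by
  obtain ⟨n, a, e, ha, he, ho, rfl⟩ := (nonneg_iff' hle _).1 hx
  rw [Finset.smul_sum]
  simp only [smul_smul]
  exact ond_fin hle _ e (fun i => mul_nonneg hc (ha i)) he ho

lemma mul_nonneg'' (hle : ∀ s t : R, s ≤ t ↔ OrthNonnegDecomp D R (t - s))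
    {x y : R} (hx : 0 ≤ x) (hy : 0 ≤ y) : 0 ≤ x * y := by
  obtain ⟨n, a, e, ha, he, ho, rfl⟩ := (nonneg_iff' hle _).1 hx
  obtain ⟨m, b, f, hb, hf, hof, rfl⟩ := (nonneg_iff' hle _).1 hy
  have heq : (∑ i, a i • e i) * (∑ j, b j • f j)
      = ∑ p : Fin n × Fin m, (a p.1 * b p.2) • (e p.1 * f p.2) := by
    rw [Finset.sum_mul_sum, Fintype.sum_prod_type]
    exact Finset.sum_congr rfl fun i _ => Finset.sum_congr rfl fun j _ =>
      smul_mul_smul_comm _ _ _ _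
  rw [heq]
  refine ond_fin hle _ _ (fun p => mul_nonneg (ha _) (hb _))
    (fun p => by
      show (e p.1 * f p.2) * (e p.1 * f p.2) = _
      rw [mul_mul_mul_comm, he p.1, hf p.2])
    (fun p q hpq => by
      rw [mul_mul_mul_comm]
      by_cases h1 : p.1 = q.1
      · have h2 : p.2 ≠ q.2 := fun h2 => hpq (Prod.ext h1 h2)
        rw [hof _ _ h2, mul_zero]
      · rw [ho _ _ h1, zero_mul])

lemma nonneg_part (hle : ∀ s t : R, s ≤ t ↔ OrthNonnegDecomp D R (t - s))
    {x : R} (hx : 0 ≤ x) :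
    ∃ (n : ℕ) (a : Fin n → D) (e : Fin n → R),
      (∀ i, 0 ≤ a i) ∧ (∀ i, IsIdempotentElem (e i)) ∧
      (∀ i j, i ≠ j → e i * e j = 0) ∧ (∑ i, e i = 1) ∧ x = ∑ i, a i • e i := by
  obtain ⟨n, a, e, ha, he, ho, rfl⟩ := (nonneg_iff' hle _).1 hx
  have hE : IsIdempotentElem (∑ i, e i) := sum_orth_idem Finset.univ e he ho
  have hEe : ∀ j, (∑ i, e i) * e j = e j := fun j => by
    rw [Finset.sum_mul, Finset.sum_eq_single_of_mem j (Finset.mem_univ j)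
      (fun i _ hij => ho i j hij), he j]
  refine ⟨n + 1, Fin.cons 0 a, Fin.cons (1 - ∑ i, e i) e, ?_, ?_, ?_, ?_, ?_⟩
  · intro i
    induction i using Fin.cases with
    | zero => simpa using le_refl (0:D)
    | succ i => simpa using ha i
  · intro i
    induction i using Fin.cases with
    | zero => simpa using hE.one_sub
    | succ i => simpa using he i
  · intro i
    induction i using Fin.cases with
    | zero =>
      intro j hij
      induction j using Fin.cases with
      | zero => exact absurd rfl hij
      | succ j => simp [Fin.cons_zero, Fin.cons_succ, sub_mul, hEe j]
    | succ i =>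
      intro j hij
      induction j using Fin.cases with
      | zero =>
        have : e i * (1 - ∑ k, e k) = 0 := by
          rw [mul_sub, mul_one, mul_comm, hEe i, sub_self]
        simp [Fin.cons_zero, Fin.cons_succ, this]
      | succ j =>
        have hij' : i ≠ j := fun h => hij (by rw [h])
        simp [Fin.cons_succ, ho i j hij']
  · rw [Fin.sum_univ_succ]
    simp [Fin.cons_zero, Fin.cons_succ]
  · rw [Fin.sum_univ_succ]
    simp [Fin.cons_zero, Fin.cons_succ]

lemma add_nonneg'' (hle : ∀ s t : R, s ≤ t ↔ OrthNonnegDecomp D R (t - s))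
    {x y : R} (hx : 0 ≤ x) (hy : 0 ≤ y) : 0 ≤ x + y := by
  obtain ⟨n, a, e, ha, he, ho, h1, rfl⟩ := nonneg_part hle hx
  obtain ⟨m, b, f, hb, hf, hof, h1f, rfl⟩ := nonneg_part hle hy
  obtain ⟨k, a', b', e', he', ho', h1', hae, hbe, hpa, hpb⟩ :=
    common_refine a b e f he hf ho hof h1 h1f
  have : (∑ i, a i • e i) + (∑ j, b j • f j) = ∑ i, (a' i + b' i) • e' i := by
    rw [← hae, ← hbe, ← Finset.sum_add_distrib]
    exact Finset.sum_congr rfl fun i _ => (add_smul _ _ _).symm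
  rw [this]
  refine ond_fin hle _ _ (fun i => ?_) he' ho'
  obtain ⟨ia, hia⟩ := hpa i
  obtain ⟨ib, hib⟩ := hpb i
  rw [hia, hib]
  exact add_nonneg (ha ia) (hb ib)

lemma add_le_add'' (hle : ∀ s t : R, s ≤ t ↔ OrthNonnegDecomp D R (t - s))
    {x y z w : R} (h1 : x ≤ y) (h2 : z ≤ w) : x + z ≤ y + w := by
  rw [le_iff_sub' hle] at h1 h2 ⊢
  have h3 := add_nonneg'' hle h1 h2
  rwa [show y - x + (w - z) = y + w - (x + z) by ring] at h3

lemma neg_le_neg'' (hle : ∀ s t : R, s ≤ t ↔ OrthNonnegDecomp D R (t - s))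
    {x y : R} (h : x ≤ y) : -y ≤ -x := by
  rw [le_iff_sub' hle] at h ⊢
  rwa [show y - x = -x - -y by ring] at h

lemma mul_le_mul_left'' (hle : ∀ s t : R, s ≤ t ↔ OrthNonnegDecomp D R (t - s))
    {x y c : R} (h : x ≤ y) (hc : 0 ≤ c) : c * x ≤ c * y := by
  rw [le_iff_sub' hle] at h ⊢
  have h3 := mul_nonneg'' hle hc h
  rwa [show c * (y - x) = c * y - c * x by ring] at h3

lemma sum_nonneg'' (hle : ∀ s t : R, s ≤ t ↔ OrthNonnegDecomp D R (t - s))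
    {ι : Type*} (s : Finset ι) (f : ι → R) (h : ∀ i ∈ s, 0 ≤ f i) :
    0 ≤ ∑ i ∈ s, f i :=
  Finset.sum_induction f (0 ≤ ·) (fun _ _ ha hb => add_nonneg'' hle ha hb) le_rfl h

lemma coeff_nonneg' (hle : ∀ s t : R, s ≤ t ↔ OrthNonnegDecomp D R (t - s))
    (htf : SpTorsionFree D R) {c : D} {e : R} (he : IsIdempotentElem e) (hne : e ≠ 0)
    (h : 0 ≤ c • e) : 0 ≤ c := by
  by_contra hc
  push_neg at hc
  have h2 : 0 ≤ (-c) • e := smul_nonneg'' hle (neg_nonneg.2 hc.le) (idem_nonneg hle he)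
  have h3 : c • e ≤ 0 := by
    rw [le_iff_sub' hle, zero_sub, ← neg_smul]
    exact h2
  have h4 : c • e = 0 := le_antisymm h3 h
  rcases htf c e h4 with h5 | h5
  · exact absurd h5 (ne_of_lt hc)
  · exact hne h5

end OrderPart

section LatticePart
variable [Lattice R]

lemma eq_inf_of' {x y z : R} (hzx : z ≤ x) (hzy : z ≤ y)
    (hmin : ∀ v, v ≤ x → v ≤ y → v ≤ z) : x ⊓ y = z :=
  le_antisymm (hmin _ inf_le_left inf_le_right) (le_inf hzx hzy)

lemma inf_idem_mul' (hle : ∀ s t : R, s ≤ t ↔ OrthNonnegDecomp D R (t - s))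
    {e f : R} (he : IsIdempotentElem e) (hf : IsIdempotentElem f) :
    e ⊓ f = e * f := by
  refine eq_inf_of' ?_ ?_ ?_
  · rw [le_iff_sub' hle, show e - e * f = e * (1 - f) by ring]
    exact mul_nonneg'' hle (idem_nonneg hle he) (idem_nonneg hle hf.one_sub)
  · rw [le_iff_sub' hle, show f - e * f = (1 - e) * f by ring]
    exact mul_nonneg'' hle (idem_nonneg hle he.one_sub) (idem_nonneg hle hf)
  · intro v hve hvf
    have h0 : (1 - e) * e = 0 := by rw [sub_mul, one_mul, he.eq, sub_self]
    have ha : (1 - e) * v ≤ 0 := by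
      have := mul_le_mul_left'' hle hve (idem_nonneg hle he.one_sub)
      rwa [h0] at this
    have hb : e * v ≤ e * f := mul_le_mul_left'' hle hvf (idem_nonneg hle he)
    have hsum := add_le_add'' hle hb ha
    rwa [add_zero, show e * v + (1 - e) * v = v by ring] at hsum

lemma two_inf_one' (hle : ∀ s t : R, s ≤ t ↔ OrthNonnegDecomp D R (t - s))
    {e : R} (he : IsIdempotentElem e) : ((2:D) • e) ⊓ 1 = e := by
  refine eq_inf_of' ?_ (idem_le_one hle he) ?_
  · rw [le_iff_sub' hle, two_smul, show e + e - e = e by ring]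
    exact idem_nonneg hle he
  · intro v hv2 hv1
    have ha : (1 - e) * v ≤ 0 := by
      have h2 := mul_le_mul_left'' hle hv2 (idem_nonneg hle he.one_sub)
      have h0 : (1 - e) * ((2:D) • e) = 0 := by
        rw [mul_smul_comm, sub_mul, one_mul, he.eq, sub_self, smul_zero]
      rwa [h0] at h2
    have hb : e * v ≤ e * 1 := mul_le_mul_left'' hle hv1 (idem_nonneg hle he)
    have hsum := add_le_add'' hle hb ha
    rwa [add_zero, mul_one, show e * v + (1 - e) * v = v by ring] at hsum

lemma bsmul_inf' (hle : ∀ s t : R, s ≤ t ↔ OrthNonnegDecomp D R (t - s))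
    {f : R} {b : D} (hf : IsIdempotentElem f) (hb0 : 0 ≤ b) (hb1 : b ≤ 1) :
    f ⊓ (b • f + (1 - f)) = b • f := by
  refine eq_inf_of' ?_ ?_ ?_
  · rw [le_iff_sub' hle, show f - b • f = (1 - b) • f by rw [sub_smul, one_smul]]
    exact smul_nonneg'' hle (sub_nonneg.2 hb1) (idem_nonneg hle hf)
  · rw [le_iff_sub' hle, show b • f + (1 - f) - b • f = 1 - f by ring]
    exact idem_nonneg hle hf.one_sub
  · intro v hvf hvb
    have h0 : (1 - f) * f = 0 := by rw [sub_mul, one_mul, hf.eq, sub_self]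
    have ha : (1 - f) * v ≤ 0 := by
      have := mul_le_mul_left'' hle hvf (idem_nonneg hle hf.one_sub)
      rwa [h0] at this
    have hb : f * v ≤ f * (b • f + (1 - f)) := mul_le_mul_left'' hle hvb (idem_nonneg hle hf)
    have hcomp : f * (b • f + (1 - f)) = b • f := by
      rw [mul_add, mul_smul_comm, hf.eq, mul_sub, mul_one, hf.eq, sub_self, add_zero]
    rw [hcomp] at hb
    have hsum := add_le_add'' hle hb ha
    rwa [add_zero, show f * v + (1 - f) * v = v by ring] at hsum

lemma sup_zero_eq' (hle : ∀ s t : R, s ≤ t ↔ OrthNonnegDecomp D R (t - s))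
    (x : R) : x ⊔ 0 = -((-x) ⊓ 0) := by
  refine le_antisymm (sup_le ?_ ?_) ?_
  · have := neg_le_neg'' hle (inf_le_left (a := -x) (b := (0:R)))
    rwa [neg_neg] at this
  · have := neg_le_neg'' hle (inf_le_right (a := -x) (b := (0:R)))
    rwa [neg_zero] at this
  · have h1 : -(x ⊔ 0) ≤ (-x) ⊓ 0 := by
      refine le_inf ?_ ?_
      · exact neg_le_neg'' hle le_sup_left
      · have := neg_le_neg'' hle (le_sup_right (a := x) (b := (0:R)))
        rwa [neg_zero] at this
    have := neg_le_neg'' hle h1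
    rwa [neg_neg] at this

lemma idem_of_double' (hle : ∀ s t : R, s ≤ t ↔ OrthNonnegDecomp D R (t - s))
    (hsp : IsSpecker D R) {u : R} (h : ((2:D) • u) ⊓ 1 = u) : IsIdempotentElem u := by
  obtain ⟨n, a, e, he, ho, h1, hu⟩ := specker_partDecomp hsp u
  have hu1 : u ≤ 1 := by
    have := inf_le_right (a := (2:D) • u) (b := (1:R)); rwa [h] at this
  have hu2 : u ≤ (2:D) • u := by
    have := inf_le_left (a := (2:D) • u) (b := (1:R)); rwa [h] at this
  have hu0 : 0 ≤ u := by
    rw [le_iff_sub' hle] at hu2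
    rwa [two_smul, add_sub_cancel_right] at hu2
  have key : ∀ i, (a i * a i) • e i = a i • e i := by
    intro i
    by_cases hei : e i = 0
    · rw [hei, smul_zero, smul_zero]
    · have hue : u * e i = a i • e i := by rw [hu]; exact comp_mul a e he ho i
      have h1e : (1 - u) * e i = (1 - a i) • e i := by
        rw [sub_mul, one_mul, hue, sub_smul, one_smul]
      have hai0 : 0 ≤ a i := by
        refine coeff_nonneg' hle hsp.1 (he i) hei ?_
        rw [← hue]
        exact mul_nonneg'' hle hu0 (idem_nonneg hle (he i))
      have hai1 : a i ≤ 1 := by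
        have h1u : 0 ≤ (1:R) - u := by rwa [← le_iff_sub' hle]
        have := coeff_nonneg' hle hsp.1 (he i) hei (h1e ▸
          mul_nonneg'' hle h1u (idem_nonneg hle (he i)))
        linarith
      set c := min (a i) (1 - a i) with hc
      have hc0 : 0 ≤ c := le_min hai0 (by linarith)
      have hca : c ≤ a i := min_le_left _ _
      have hca' : c ≤ 1 - a i := min_le_right _ _
      have hv2 : u + c • e i ≤ (2:D) • u := by
        rw [le_iff_sub' hle]
        have : (2:D) • u - (u + c • e i) = u * (1 - e i) + (a i - c) • e i := by
          rw [two_smul, mul_sub, mul_one, hue, sub_smul]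
          ring
        rw [this]
        exact add_nonneg'' hle
          (mul_nonneg'' hle hu0 (idem_nonneg hle (he i).one_sub))
          (smul_nonneg'' hle (by linarith) (idem_nonneg hle (he i)))
      have hv1 : u + c • e i ≤ 1 := by
        rw [le_iff_sub' hle]
        have : (1:R) - (u + c • e i) = (1 - u) * (1 - e i) + ((1 - a i) - c) • e i := by
          rw [mul_sub, mul_one, h1e, sub_smul (1 - a i) c, sub_smul, one_smul]
          ring
        rw [this]
        exact add_nonneg'' hle
          (mul_nonneg'' hle (by rwa [← le_iff_sub' hle]) (idem_nonneg hle (he i).one_sub))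
          (smul_nonneg'' hle (by linarith) (idem_nonneg hle (he i)))
      have hvu : u + c • e i ≤ u := by
        have := le_inf hv2 hv1; rwa [h] at this
      have hle0 : c • e i ≤ 0 := by
        rw [le_iff_sub' hle] at hvu ⊢
        rwa [show u - (u + c • e i) = 0 - c • e i by ring] at hvu
      have hge0 : 0 ≤ c • e i := smul_nonneg'' hle hc0 (idem_nonneg hle (he i))
      have hceq : c • e i = 0 := le_antisymm hle0 hge0
      have hc0' : c = 0 := by
        rcases hsp.1 c (e i) hceq with h' | h'
        · exact h'
        · exact absurd h' hei
      rcases le_total (a i) (1 - a i) with h' | h'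
      · have : a i = 0 := by rw [hc, min_eq_left h'] at hc0'; exact hc0'
        rw [this, zero_mul]
      · have : a i = 1 := by rw [hc, min_eq_right h'] at hc0'; linarith
        rw [this, one_mul]
  show u * u = u
  rw [hu, sum_mul_sum_orth a a e he ho]
  exact Finset.sum_congr rfl fun i _ => key i

end LatticePart

section ProxPart
variable [Lattice R]

lemma prox_sup_zero (hle : ∀ s t : R, s ≤ t ↔ OrthNonnegDecomp D R (t - s))
    {r : R → R → Prop} (hpr : IsProximity D R r) {s f : R}
    (hf0 : 0 ≤ f) (h : r s f) : r (s ⊔ 0) f := by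
  obtain ⟨⟨h00, h11⟩, hP2, hP3, hP4, hP5, hP6, hP7, hP8, hP9, hP10, hP11⟩ := hpr
  have h0f : r 0 f := hP3 0 0 0 f le_rfl h00 hf0
  have h5 : r (-f) (-s) := hP5 _ _ h
  have h5' : r (-f) 0 := by have := hP5 _ _ h0f; rwa [neg_zero] at this
  have h4 : r (-f) ((-s) ⊓ 0) := hP4 _ _ _ h5 h5'
  have h6 := hP5 _ _ h4
  rwa [neg_neg, ← sup_zero_eq' hle] at h6

lemma prox_scale_idem (hle : ∀ s t : R, s ≤ t ↔ OrthNonnegDecomp D R (t - s))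
    {r : R → R → Prop} (hpr : IsProximity D R r) {e f : R} {b : D}
    (he : IsIdempotentElem e) (hf : IsIdempotentElem f)
    (hb0 : 0 < b) (hb1 : b ≤ 1) (h : r (b • e) f) : r e f := by
  obtain ⟨⟨h00, h11⟩, hP2, hP3, hP4, hP5, hP6, hP7, hP8, hP9, hP10, hP11⟩ := hpr
  have he1 : r e 1 := hP3 e 1 1 1 (idem_le_one hle he) h11 le_rfl
  have h7 : r (b • e) (b • (1:R)) := hP7 _ _ b hb0 he1
  have hble : b • (1:R) ≤ b • f + (1 - f) := by
    rw [le_iff_sub' hle, show b • f + (1 - f) - b • (1:R) = (1 - b) • (1 - f) by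
      rw [sub_smul, one_smul, smul_sub]; ring]
    exact smul_nonneg'' hle (sub_nonneg.2 hb1) (idem_nonneg hle hf.one_sub)
  have h3 : r (b • e) (b • f + (1 - f)) := hP3 _ _ _ _ le_rfl h7 hble
  have h4 : r (b • e) (f ⊓ (b • f + (1 - f))) := hP4 _ _ _ h h3
  rw [bsmul_inf' hle hf hb0.le hb1] at h4
  exact hP8 e f ⟨b, hb0, h4⟩

end ProxPart

end SpeckerLemmas





/-- a proximity morphism between proximity Baer-Specker `D`-algebras maps
idempotents to idempotents and restricts to a de Vries morphism on idempotents. -/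
theorem statement18 (D S T : Type*) [CommRing D] [LinearOrder D] [IsStrictOrderedRing D]
    [CommRing S] [Algebra D S] [CommRing T] [Algebra D T]
    (hS : IsSpecker D S) (hT : IsSpecker D T) (hBS : IsBaer S) (hBT : IsBaer T)
    [Lattice S] [Lattice T]
    (hleS : ∀ s t : S, s ≤ t ↔ OrthNonnegDecomp D S (t - s))
    (hleT : ∀ s t : T, s ≤ t ↔ OrthNonnegDecomp D T (t - s))
    (rS : S → S → Prop) (rT : T → T → Prop)
    (hrS : IsProximity D S rS) (hrT : IsProximity D T rT)
    (α : S → T) (hα : IsProxMorphism D S T rS rT α) :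
    (∀ e : S, IsIdempotentElem e → IsIdempotentElem (α e)) ∧
    (α 0 = 0) ∧
    (∀ e f : S, IsIdempotentElem e → IsIdempotentElem f → α (e * f) = α e * α f) ∧
    (∀ e f : S, IsIdempotentElem e → IsIdempotentElem f → rS e f →
      rT (1 - α (1 - e)) (α f)) ∧
    (∀ f : S, IsIdempotentElem f →
      (∀ e : S, IsIdempotentElem e → rS e f → α e ≤ α f) ∧
      (∀ u : T, IsIdempotentElem u →
        (∀ e : S, IsIdempotentElem e → rS e f → α e ≤ u) → α f ≤ u)) := by
  classical
  obtain ⟨hM1, hM2, hM3, hM4, hM5, hM6, hM7⟩ := hα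
  have hα1 : α 1 = 1 := by
    have h := hM5 0 1
    rwa [map_one, map_one, zero_add, hM1, zero_add] at h
  have hmono : ∀ s t : S, s ≤ t → α s ≤ α t := by
    intro s t h
    have h2 : s ⊓ t = s := inf_eq_left.2 h
    calc α s = α (s ⊓ t) := by rw [h2]
      _ = α s ⊓ α t := hM2 s t
      _ ≤ α t := inf_le_right
  have hidem : ∀ e : S, IsIdempotentElem e → IsIdempotentElem (α e) := by
    intro e he
    refine idem_of_double' hleT hT ?_
    have h6 : α ((2:D) • e) = (2:D) • α e := hM6 e 2 (by norm_num)
    rw [← h6, ← hα1, ← hM2, two_inf_one' hleS he]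
  refine ⟨hidem, hM1, ?_, ?_, ?_⟩
  · intro e f he hf
    rw [← inf_idem_mul' hleS he hf, hM2, inf_idem_mul' hleT (hidem e he) (hidem f hf)]
  · intro e f he hf hr
    have h3 := hM3 e f hr
    have h5 := hM5 (1 - e) (-1)
    have heq : (1 : S) - e + algebraMap D S (-1) = -e := by
      rw [map_neg, map_one]; ring
    rw [heq] at h5
    rw [h5, map_neg, map_one] at h3
    rwa [show -(α (1 - e) + -1) = 1 - α (1 - e) by ring] at h3
  · intro f hf
    constructor
    · intro e he hre
      exact (hM4 f).1 ⟨e, hre, rfl⟩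
    · intro u hu hub
      refine (hM4 f).2 ?_
      rintro x ⟨s, hsf, rfl⟩
      show α s ≤ u
      have hf0 : 0 ≤ f := idem_nonneg hleS hf
      have hr' : rS (s ⊔ 0) f := prox_sup_zero hleS hrS hf0 hsf
      set s' := s ⊔ 0 with hs'def
      have hαs : α s ≤ α s' := hmono _ _ le_sup_left
      have h0s' : (0:S) ≤ s' := le_sup_right
      have hs'1 : s' ≤ 1 := le_trans (hrS.2.1 _ _ hr') (idem_le_one hleS hf)
      have h1s' : (0:S) ≤ 1 - s' := by rwa [← le_iff_sub' hleS]
      obtain ⟨n, a, ee, he, ho, h1, hdef⟩ := specker_partDecomp hS s'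
      set J : Finset (Fin n) := Finset.univ.filter (fun i => a i • ee i ≠ 0) with hJ
      have hsJ : s' = ∑ i ∈ J, a i • ee i := by
        rw [hdef]
        exact (Finset.sum_filter_of_ne (fun i _ h => h)).symm
      by_cases hJe : J = ∅
      · have hz : s' = 0 := by rw [hsJ, hJe, Finset.sum_empty]
        have h2 : α s ≤ α 0 := hz ▸ hαs
        rw [hM1] at h2
        exact le_trans h2 (idem_nonneg hleT hu)
      · have hJne : J.Nonempty := Finset.nonempty_of_ne_empty hJe
        have hcomp : ∀ i, s' * ee i = a i • ee i := fun i => by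
          rw [hdef]; exact comp_mul a ee he ho i
        have hepos : ∀ i, (0:S) ≤ ee i := fun i => idem_nonneg hleS (he i)
        have hmem : ∀ i ∈ J, a i • ee i ≠ 0 := by
          intro i hi
          rw [hJ, Finset.mem_filter] at hi
          exact hi.2
        have hnei : ∀ i ∈ J, ee i ≠ 0 := by
          intro i hi h0
          exact hmem i hi (by rw [h0, smul_zero])
        have haige : ∀ i ∈ J, 0 < a i := by
          intro i hi
          have hane : a i ≠ 0 := fun h => hmem i hi (by rw [h, zero_smul])
          have h0 : 0 ≤ a i := by
            refine coeff_nonneg' hleS hS.1 (he i) (hnei i hi) ?_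
            rw [← hcomp i]
            exact mul_nonneg'' hleS h0s' (hepos i)
          exact lt_of_le_of_ne h0 (Ne.symm hane)
        have haile : ∀ i ∈ J, a i ≤ 1 := by
          intro i hi
          have heqi : (1 - s') * ee i = (1 - a i) • ee i := by
            rw [sub_mul, one_mul, hcomp i, sub_smul, one_smul]
          have h' := coeff_nonneg' hleS hS.1 (he i) (hnei i hi)
            (heqi ▸ mul_nonneg'' hleS h1s' (hepos i))
          linarith
        set e0 : S := ∑ i ∈ J, ee i with he0def
        have he0 : IsIdempotentElem e0 := sum_orth_idem J ee he ho
        have hs'e0 : s' ≤ e0 := by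
          rw [le_iff_sub' hleS, he0def, hsJ, ← Finset.sum_sub_distrib]
          refine sum_nonneg'' hleS _ _ (fun i hi => ?_)
          have heqi : ee i - a i • ee i = (1 - s') * ee i := by
            rw [sub_mul, one_mul, hcomp i]
          rw [heqi]
          exact mul_nonneg'' hleS h1s' (hepos i)
        set b : D := (J.image a).min' (hJne.image a) with hbdef
        obtain ⟨i0, hi0, hbi0⟩ := Finset.mem_image.1 (Finset.min'_mem (J.image a) (hJne.image a))
        have hb0 : 0 < b := by rw [hbdef, ← hbi0]; exact haige i0 hi0
        have hb1 : b ≤ 1 := by rw [hbdef, ← hbi0]; exact haile i0 hi0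
        have hble : ∀ i ∈ J, b ≤ a i := fun i hi =>
          Finset.min'_le _ _ (Finset.mem_image_of_mem a hi)
        have hbe0 : b • e0 ≤ s' := by
          rw [le_iff_sub' hleS, hsJ, he0def, Finset.smul_sum, ← Finset.sum_sub_distrib]
          refine sum_nonneg'' hleS _ _ (fun i hi => ?_)
          rw [← sub_smul]
          exact smul_nonneg'' hleS (sub_nonneg.2 (hble i hi)) (hepos i)
        have hrbe0 : rS (b • e0) f := hrS.2.2.1 _ _ _ _ hbe0 hr' le_rfl
        have hre0 : rS e0 f := prox_scale_idem hleS hrS he0 hf hb0 hb1 hrbe0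
        calc α s ≤ α s' := hαs
          _ ≤ α e0 := hmono _ _ hs'e0
          _ ≤ u := hub e0 he0 hre0
end

section
/- Let D be a totally ordered integral domain, (S, ◁) and (T, ◁) proximity Baer-Specker D-algebras, and α : S → T a proximity morphism. If s ∈ S is written in decreasing form s = a_0 + Σ_{i=1}^n b_i e_i with e_1 ≥ ... ≥ e_n idempotents, a_0 ∈ D, and b_i > 0 in D for i ≥ 1, then α(s) = a_0 + Σ_{i=1}^n b_i α(e_i). -/
open Finset

set_option linter.unusedSectionVars false

section OND
variable {D S : Type*} [CommRing D] [LinearOrder D] [IsStrictOrderedRing D] [CommRing S] [Algebra D S]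

lemma sum_orth_idem_s19 {ι : Type*} (t : Finset ι) (f : ι → S)
    (hidem : ∀ i ∈ t, IsIdempotentElem (f i))
    (horth : ∀ i ∈ t, ∀ j ∈ t, i ≠ j → f i * f j = 0) :
    IsIdempotentElem (∑ i ∈ t, f i) := by
  unfold IsIdempotentElem
  rw [Finset.sum_mul_sum]
  refine Finset.sum_congr rfl (fun i hi => ?_)
  rw [Finset.sum_eq_single i (fun j hj hne => horth i hi j hj (Ne.symm hne)) (fun h => absurd hi h)]
  exact hidem i hi

lemma mul_sum_orth {ι : Type*} [Fintype ι] (f : ι → S)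
    (hidem : ∀ i, IsIdempotentElem (f i))
    (horth : ∀ i j, i ≠ j → f i * f j = 0) (i : ι) :
    f i * ∑ j, f j = f i := by
  rw [Finset.mul_sum, Finset.sum_eq_single i (fun j _ hne => horth i j (Ne.symm hne))
    (fun h => absurd (Finset.mem_univ i) h)]
  exact hidem i

lemma ond_of_fintype {ι : Type*} [Fintype ι] {a : ι → D} {e : ι → S} {s : S}
    (ha : ∀ i, 0 ≤ a i) (hidem : ∀ i, IsIdempotentElem (e i))
    (horth : ∀ i j, i ≠ j → e i * e j = 0) (hs : s = ∑ i, a i • e i) :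
    OrthNonnegDecomp D S s := by
  refine ⟨Fintype.card ι, a ∘ (Fintype.equivFin ι).symm, e ∘ (Fintype.equivFin ι).symm,
    fun i => ha _, fun i => hidem _, fun i j hij => horth _ _ (fun h => hij (by
      simpa using congrArg (Fintype.equivFin ι) h)), ?_⟩
  rw [hs, ← Equiv.sum_comp (Fintype.equivFin ι).symm (fun i => a i • e i)]
  rfl

lemma ond_zero : OrthNonnegDecomp D S 0 :=
  ⟨0, Fin.elim0, Fin.elim0, fun i => i.elim0, fun i => i.elim0, fun i => i.elim0, by simp⟩

lemma ond_single {b : D} {e : S} (hb : 0 ≤ b) (he : IsIdempotentElem e) :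
    OrthNonnegDecomp D S (b • e) :=
  ⟨1, fun _ => b, fun _ => e, fun _ => hb, fun _ => he,
    fun i j hij => absurd (Subsingleton.elim i j) hij, by simp⟩

lemma ond_add {s t : S} (hs : OrthNonnegDecomp D S s) (ht : OrthNonnegDecomp D S t) :
    OrthNonnegDecomp D S (s + t) := by
  obtain ⟨n, a, f, ha, hf, hof, hseq⟩ := hs
  obtain ⟨m, c, g, hc, hg, hog, hteq⟩ := ht
  set F : Option (Fin n) → S := fun o => o.elim (1 - ∑ i, f i) f with hF
  set A : Option (Fin n) → D := fun o => o.elim 0 a with hA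
  set G : Option (Fin m) → S := fun o => o.elim (1 - ∑ i, g i) g with hG
  set C : Option (Fin m) → D := fun o => o.elim 0 c with hC
  have hFidem : ∀ o, IsIdempotentElem (F o) := by
    rintro (_ | i)
    · exact (sum_orth_idem_s19 Finset.univ f (fun i _ => hf i)
        (fun i _ j _ hij => hof i j hij)).one_sub
    · exact hf i
  have hGidem : ∀ o, IsIdempotentElem (G o) := by
    rintro (_ | i)
    · exact (sum_orth_idem_s19 Finset.univ g (fun i _ => hg i)
        (fun i _ j _ hij => hog i j hij)).one_sub
    · exact hg i
  have hmulf : ∀ i : Fin n, f i * (1 - ∑ j, f j) = 0 := fun i => by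
    rw [mul_sub, mul_one, mul_sum_orth f hf hof, sub_self]
  have hmulg : ∀ i : Fin m, g i * (1 - ∑ j, g j) = 0 := fun i => by
    rw [mul_sub, mul_one, mul_sum_orth g hg hog, sub_self]
  have hForth : ∀ o p, o ≠ p → F o * F p = 0 := by
    rintro (_ | i) (_ | j) hne
    · exact absurd rfl hne
    · exact mul_comm (F (some j)) (F none) ▸ hmulf j
    · exact hmulf i
    · exact hof i j (fun h => hne (by rw [h]))
  have hGorth : ∀ o p, o ≠ p → G o * G p = 0 := by
    rintro (_ | i) (_ | j) hne
    · exact absurd rfl hne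
    · exact mul_comm (G (some j)) (G none) ▸ hmulg j
    · exact hmulg i
    · exact hog i j (fun h => hne (by rw [h]))
  have hFsum : ∑ o, F o = 1 := by
    rw [Fintype.sum_option]; simp [hF]
  have hGsum : ∑ o, G o = 1 := by
    rw [Fintype.sum_option]; simp [hG]
  refine ond_of_fintype (ι := Option (Fin n) × Option (Fin m))
    (a := fun p => A p.1 + C p.2) (e := fun p => F p.1 * G p.2) ?_ ?_ ?_ ?_
  · rintro ⟨(_ | i), (_ | j)⟩ <;> simp [hA, hC] <;> first
      | exact ha _ | exact hc _ | exact add_nonneg (ha _) (hc _)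
  · intro p
    show (F p.1 * G p.2) * (F p.1 * G p.2) = F p.1 * G p.2
    rw [mul_mul_mul_comm, hFidem p.1, hGidem p.2]
  · rintro ⟨o, p⟩ ⟨o', p'⟩ hne
    by_cases h : o = o'
    · subst h
      have hp : p ≠ p' := fun h => hne (by rw [h])
      show (F o * G p) * (F o * G p') = 0
      rw [mul_mul_mul_comm, hGorth p p' hp, mul_zero]
    · show (F o * G p) * (F o' * G p') = 0
      rw [mul_mul_mul_comm, hForth o o' h, zero_mul]
  · rw [Fintype.sum_prod_type]
    have key : ∀ o : Option (Fin n), ∑ p : Option (Fin m),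
        (A o + C p) • (F o * G p) = A o • F o + F o * ∑ p, C p • G p := by
      intro o
      calc ∑ p : Option (Fin m), (A o + C p) • (F o * G p)
          = ∑ p : Option (Fin m), (A o • (F o * G p) + F o * (C p • G p)) :=
            Finset.sum_congr rfl (fun p _ => by rw [add_smul, mul_smul_comm])
        _ = (∑ p : Option (Fin m), A o • (F o * G p)) + ∑ p : Option (Fin m), F o * (C p • G p) :=
            Finset.sum_add_distrib
        _ = A o • F o + F o * ∑ p, C p • G p := by
            rw [← Finset.smul_sum, ← Finset.mul_sum, ← Finset.mul_sum, hGsum, mul_one]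
    rw [Finset.sum_congr rfl (fun o _ => key o), Finset.sum_add_distrib]
    have h1 : ∑ o, A o • F o = s := by
      rw [Fintype.sum_option]; simp [hA, hF, hseq]
    have h2 : ∑ o, F o * (∑ p, C p • G p) = ∑ p, C p • G p := by
      rw [← Finset.sum_mul, hFsum, one_mul]
    have h3 : ∑ p, C p • G p = t := by
      rw [Fintype.sum_option]; simp [hC, hG, hteq]
    rw [h1, h2, h3]

lemma ond_mul_idem {s : S} (hs : OrthNonnegDecomp D S s) {h : S} (hh : IsIdempotentElem h) :
    OrthNonnegDecomp D S (s * h) := by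
  obtain ⟨n, a, f, ha, hf, hof, hseq⟩ := hs
  refine ⟨n, a, fun i => f i * h, ha, ?_, ?_, ?_⟩
  · intro i; show (f i * h) * (f i * h) = f i * h
    rw [mul_mul_mul_comm, hf i, hh]
  · intro i j hij; show (f i * h) * (f j * h) = 0
    rw [mul_mul_mul_comm, hof i j hij, zero_mul]
  · rw [hseq, Finset.sum_mul]
    exact Finset.sum_congr rfl (fun i _ => smul_mul_assoc _ _ _)

lemma ond_sum {ι : Type*} (t : Finset ι) (b : ι → D) (e : ι → S)
    (hb : ∀ i ∈ t, 0 ≤ b i) (he : ∀ i ∈ t, IsIdempotentElem (e i)) :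
    OrthNonnegDecomp D S (∑ i ∈ t, b i • e i) :=
  Finset.sum_induction _ _ (fun _ _ hx hy => ond_add hx hy) ond_zero
    (fun i hi => ond_single (hb i hi) (he i hi))

end OND

section Absorb
variable {D S : Type*} [CommRing D] [LinearOrder D] [IsStrictOrderedRing D] [CommRing S] [Algebra D S]

lemma idem_absorb (htf : SpTorsionFree D S) {e f : S}
    (he : IsIdempotentElem e) (hf : IsIdempotentElem f)
    (hef : OrthNonnegDecomp D S (e - f)) : e * f = f := by
  obtain ⟨n, a, g, ha, hg, hog, heq⟩ := hef
  have key : ∀ j : Fin n, a j • (f * g j) = 0 := by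
    intro j
    set q : S := f * g j with hq
    have hqidem : IsIdempotentElem q := by
      show (f * g j) * (f * g j) = f * g j
      rw [mul_mul_mul_comm, hf, hg j]
    have hdg : (e - f) * g j = a j • g j := by
      rw [heq, Finset.sum_mul, Finset.sum_eq_single j
        (fun i _ hij => by rw [smul_mul_assoc, hog i j hij, smul_zero])
        (fun h => absurd (Finset.mem_univ j) h), smul_mul_assoc, hg j]
    have heqq : e * q = (1 + a j) • q := by
      have : e * q = f * q + (e - f) * q := by ring
      rw [this, hq, ← mul_assoc, hf]
      have : (e - f) * (f * g j) = ((e - f) * g j) * f := by ring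
      rw [this, hdg, smul_mul_assoc, add_smul, one_smul, mul_comm (g j) f]
    have hidem2 : IsIdempotentElem (e * q) := by
      show (e * q) * (e * q) = e * q
      rw [mul_mul_mul_comm, he, hqidem]
    rw [heqq] at hidem2
    have hsq : ((1 + a j) • q) * ((1 + a j) • q) = ((1 + a j) * (1 + a j)) • q := by
      rw [smul_mul_smul_comm, hqidem]
    have hz : ((1 + a j) * (1 + a j) - (1 + a j)) • q = 0 := by
      rw [sub_smul, ← hsq, hidem2, sub_self]
    have hfac : (1 + a j) * (1 + a j) - (1 + a j) = (1 + a j) * a j := by ring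
    rw [hfac] at hz
    rcases htf _ _ hz with h | h
    · rcases mul_eq_zero.mp h with h1 | h1
      · nlinarith [ha j]
      · rw [h1, zero_smul]
    · rw [h, smul_zero]
  have hfd : f * (e - f) = 0 := by
    rw [heq, Finset.mul_sum]
    refine Finset.sum_eq_zero (fun j _ => ?_)
    rw [mul_smul_comm, key j]
  have : e * f = f * f + f * (e - f) := by ring
  rw [this, hf, hfd, add_zero]

lemma ond_cut (htf : SpTorsionFree D S) {u v w : S}
    (hv : OrthNonnegDecomp D S v)
    (hwu : OrthNonnegDecomp D S (w - u)) (hwv : OrthNonnegDecomp D S (w - v))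
    (huv : u * v = 0) : OrthNonnegDecomp D S (w - u - v) := by
  obtain ⟨k, d, h, hd, hidem, horth, hveq⟩ := hv
  set F : Finset (Fin k) := Finset.univ.filter (fun i => d i ≠ 0) with hFdef
  set H : S := ∑ i ∈ F, h i with hHdef
  have hHidem : IsIdempotentElem H :=
    sum_orth_idem_s19 F h (fun i _ => hidem i) (fun i _ j _ hij => horth i j hij)
  have hvh : ∀ j : Fin k, v * h j = d j • h j := by
    intro j
    rw [hveq, Finset.sum_mul, Finset.sum_eq_single j
      (fun i _ hij => by rw [smul_mul_assoc, horth i j hij, smul_zero])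
      (fun hc => absurd (Finset.mem_univ j) hc), smul_mul_assoc, hidem j]
  have hvH : v * H = v := by
    rw [hHdef, Finset.mul_sum]
    have h1 : ∑ j ∈ F, v * h j = ∑ j ∈ F, d j • h j :=
      Finset.sum_congr rfl (fun j _ => hvh j)
    rw [h1, hFdef, Finset.sum_filter_of_ne (fun j _ hne hj => by rw [hj, zero_smul] at hne; exact hne rfl), ← hveq]
  have huH : u * H = 0 := by
    rw [hHdef, Finset.mul_sum]
    refine Finset.sum_eq_zero (fun j hj => ?_)
    have hdj : d j ≠ 0 := (Finset.mem_filter.mp hj).2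
    have : d j • (u * h j) = 0 := by
      rw [← mul_smul_comm, ← hvh j, ← mul_assoc, huv, zero_mul]
    rcases htf _ _ this with hcase | hcase
    · exact absurd hcase hdj
    · exact hcase
  have hsplit : w - u - v = (w - v) * H + (w - u) * (1 - H) := by
    linear_combination hvH - huH
  rw [hsplit]
  exact ond_add (ond_mul_idem hwv hHidem) (ond_mul_idem hwu hHidem.one_sub)

end Absorb

section LatId
variable {D S : Type*} [CommRing D] [LinearOrder D] [IsStrictOrderedRing D] [CommRing S] [Algebra D S] [Lattice S]

lemma ond_congr {x y : S} (h : x = y) (hx : OrthNonnegDecomp D S x) :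
    OrthNonnegDecomp D S y := h ▸ hx

lemma inf_add_sup' (hle : ∀ s t : S, s ≤ t ↔ OrthNonnegDecomp D S (t - s)) (x y : S) :
    x ⊓ y + (x ⊔ y) = x + y := by
  have hx : x ≤ x + y - x ⊓ y := by
    rw [hle]
    exact ond_congr (by ring) ((hle _ _).mp (inf_le_right (a := x) (b := y)))
  have hy : y ≤ x + y - x ⊓ y := by
    rw [hle]
    exact ond_congr (by ring) ((hle _ _).mp (inf_le_left (a := x) (b := y)))
  have hx' : x + y - x ⊔ y ≤ x := by
    rw [hle]
    exact ond_congr (by ring) ((hle _ _).mp (le_sup_right (a := x) (b := y)))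
  have hy' : x + y - x ⊔ y ≤ y := by
    rw [hle]
    exact ond_congr (by ring) ((hle _ _).mp (le_sup_left (a := x) (b := y)))
  have h1 : x ⊔ y ≤ x + y - x ⊓ y := sup_le hx hy
  have h2 : x + y - x ⊔ y ≤ x ⊓ y := le_inf hx' hy'
  refine le_antisymm ?_ ?_
  · rw [hle]
    exact ond_congr (by ring) ((hle _ _).mp h1)
  · rw [hle]
    exact ond_congr (by ring) ((hle _ _).mp h2)

end LatId

section Main
variable {D S T : Type*} [CommRing D] [LinearOrder D] [IsStrictOrderedRing D]
  [CommRing S] [Algebra D S] [CommRing T] [Algebra D T] [Lattice S] [Lattice T]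

lemma key_induction
    (htfS : SpTorsionFree D S)
    (hleS : ∀ s t : S, s ≤ t ↔ OrthNonnegDecomp D S (t - s))
    (hleT : ∀ s t : T, s ≤ t ↔ OrthNonnegDecomp D T (t - s))
    (α : S → T)
    (hα0 : α 0 = 0)
    (hαinf : ∀ s t : S, α (s ⊓ t) = α s ⊓ α t)
    (hαadd : ∀ (s : S) (a : D), α (s + algebraMap D S a) = α s + algebraMap D T a)
    (hαsmul : ∀ (s : S) (a : D), 0 ≤ a → α (a • s) = a • α s)
    (hαsup : ∀ (s : S) (a : D), α (s ⊔ algebraMap D S a) = α s ⊔ algebraMap D T a) :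
    ∀ (n : ℕ) (a0 : D) (b : Fin n → D) (e : Fin n → S),
      (∀ i, 0 < b i) → (∀ i, IsIdempotentElem (e i)) → Antitone e →
      α (algebraMap D S a0 + ∑ i, b i • e i) = algebraMap D T a0 + ∑ i, b i • α (e i) := by
  have hαmap : ∀ a : D, α (algebraMap D S a) = algebraMap D T a := by
    intro a
    have := hαadd 0 a
    rwa [zero_add, hα0, zero_add] at this
  intro n
  induction n with
  | zero =>
    intro a0 b e _ _ _
    simp only [Finset.univ_eq_empty, Finset.sum_empty, add_zero]
    exact hαmap a0
  | succ n ih =>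
    intro a0 b e hb hidem hanti
    set c : D := a0 + b 0 with hc
    set u : S := ∑ i : Fin n, b i.succ • e i.succ with hu
    set s : S := algebraMap D S a0 + ∑ i, b i • e i with hs
    set v : S := b 0 • ((1:S) - e 0) with hv
    set m : S := algebraMap D S a0 + b 0 • e 0 with hm
    set M : S := algebraMap D S c + u with hM
    have hsplit : s = m + u := by
      rw [hs, hm, hu, Fin.sum_univ_succ]; abel
    have hmv : m + v = algebraMap D S c := by
      rw [hm, hv, hc, map_add, smul_sub,
        show (algebraMap D S (b 0) : S) = b 0 • (1:S) from Algebra.algebraMap_eq_smul_one (b 0)]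
      abel
    have hMval : M = s + v := by
      rw [hM, hsplit, ← hmv]; abel
    have hvidem : IsIdempotentElem ((1:S) - e 0) := (hidem 0).one_sub
    have hondv : OrthNonnegDecomp D S v := ond_single (hb 0).le hvidem
    have hondu : OrthNonnegDecomp D S u := by
      rw [hu]
      exact ond_sum Finset.univ _ _ (fun i _ => (hb i.succ).le) (fun i _ => hidem i.succ)
    have habs : ∀ i : Fin n, e 0 * e i.succ = e i.succ := fun i =>
      idem_absorb htfS (hidem 0) (hidem i.succ)
        ((hleS _ _).mp (hanti (Fin.zero_le i.succ)))
    have huv : u * v = 0 := by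
      rw [hu, hv, Finset.sum_mul]
      refine Finset.sum_eq_zero (fun i _ => ?_)
      rw [smul_mul_smul_comm, mul_sub, mul_one, mul_comm (e i.succ) (e 0), habs i, sub_self, smul_zero]
    have hsM : s ≤ M := by
      rw [hleS]
      exact ond_congr (by rw [hMval]; ring) hondv
    have hcM : algebraMap D S c ≤ M := by
      rw [hleS]
      exact ond_congr (by rw [hM]; ring) hondu
    have hMsup : M ≤ s ⊔ algebraMap D S c := by
      rw [hleS]
      have h1 : OrthNonnegDecomp D S ((s ⊔ algebraMap D S c - m) - u) :=
        ond_congr (by rw [hsplit]; ring)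
          ((hleS _ _).mp (le_sup_left (a := s) (b := algebraMap D S c)))
      have h2 : OrthNonnegDecomp D S ((s ⊔ algebraMap D S c - m) - v) :=
        ond_congr (by rw [← hmv]; ring)
          ((hleS _ _).mp (le_sup_right (a := s) (b := algebraMap D S c)))
      have h3 := ond_cut htfS hondv h1 h2 huv
      exact ond_congr (by rw [hMval, hsplit]; ring) h3
    have hsupeq : s ⊔ algebraMap D S c = M := le_antisymm (sup_le hsM hcM) hMsup
    have hinfeq : s ⊓ algebraMap D S c = m := by
      have h := inf_add_sup' hleS s (algebraMap D S c)
      rw [hsupeq] at h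
      have h4 : m + M = s + algebraMap D S c := by rw [hMval, ← hmv]; abel
      rw [← h4] at h
      exact add_right_cancel h
    have hIH := ih c (fun i => b i.succ) (fun i => e i.succ)
      (fun i => hb i.succ) (fun i => hidem i.succ)
      (fun i j hij => hanti (Fin.succ_le_succ_iff.mpr hij))
    have hαM : α M = algebraMap D T c + ∑ i : Fin n, b i.succ • α (e i.succ) := by
      rw [hM, hu]
      exact hIH
    have hαm : α m = algebraMap D T a0 + b 0 • α (e 0) := by
      rw [hm, add_comm (algebraMap D S a0), hαadd, hαsmul _ _ (hb 0).le, add_comm]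
    have hTid := inf_add_sup' hleT (α s) (algebraMap D T c)
    have hαinfc : α s ⊓ algebraMap D T c = α m := by
      rw [← hαmap c, ← hαinf, hinfeq]
    have hαsupc : α s ⊔ algebraMap D T c = α M := by
      rw [← hαsup, hsupeq]
    rw [hαinfc, hαsupc, hαm, hαM] at hTid
    have hfinal : α s + algebraMap D T c =
        (algebraMap D T a0 + b 0 • α (e 0) + ∑ i : Fin n, b i.succ • α (e i.succ))
          + algebraMap D T c := by
      rw [← hTid]; abel
    have hgoal := add_right_cancel hfinal
    rw [hgoal, Fin.sum_univ_succ]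
    abel

end Main


/-- a proximity morphism applied to a decreasing form
`s = a₀ + Σ bᵢ eᵢ` gives `α(s) = a₀ + Σ bᵢ α(eᵢ)`. -/
theorem statement19 (D S T : Type*) [CommRing D] [LinearOrder D] [IsStrictOrderedRing D]
    [CommRing S] [Algebra D S] [CommRing T] [Algebra D T]
    (hS : IsSpecker D S) (hT : IsSpecker D T) (hBS : IsBaer S) (hBT : IsBaer T)
    [Lattice S] [Lattice T]
    (hleS : ∀ s t : S, s ≤ t ↔ OrthNonnegDecomp D S (t - s))
    (hleT : ∀ s t : T, s ≤ t ↔ OrthNonnegDecomp D T (t - s))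
    (rS : S → S → Prop) (rT : T → T → Prop)
    (hrS : IsProximity D S rS) (hrT : IsProximity D T rT)
    (α : S → T) (hα : IsProxMorphism D S T rS rT α)
    (s : S) (a0 : D) {n : ℕ} (b : Fin n → D) (e : Fin n → S)
    (hb : ∀ i, 0 < b i) (hidem : ∀ i, IsIdempotentElem (e i)) (hanti : Antitone e)
    (hs : s = algebraMap D S a0 + ∑ i, b i • e i) :
    α s = algebraMap D T a0 + ∑ i, b i • α (e i) := by
  rw [hs]
  exact key_induction hS.1 hleS hleT α hα.1 hα.2.1 hα.2.2.2.2.1 hα.2.2.2.2.2.1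
    hα.2.2.2.2.2.2 n a0 b e hb hidem hanti
end
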